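/- arXiv:1908.01084 — 2 statements merged into one kernel-verified Lean document; each statement's English description precedes it below -/
import Mathlib

section
/- For every integer n ≥ 1, each pair (τ, stat) ∈ {(213, (31-2)), (312, (2-13))}, and all real numbers q, x, t with (1+x)(x+t)(1+xt) ≠ 0, one has Σ_{σ∈S_n(τ)} q^{stat σ} t^{des σ} = ((1+xt)/(1+x))^{n−1} · Σ_{σ∈S_n(τ)} q^{stat σ} · ((1+x)² t/((x+t)(1+xt)))^{val σ} · ((x+t)/(1+xt))^{des σ}. -/
open Finset

open scoped Classical

noncomputable section

namespace EulerExc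

variable {n : ℕ}

/-- 1-based value of `σ` at position `k ∈ [1,n]`, with boundary convention
`σ(0) = σ(n+1) = 0` outside. -/
def sv (σ : Equiv.Perm (Fin n)) (k : ℕ) : ℕ :=
  if h : 1 ≤ k ∧ k ≤ n then ((σ ⟨k - 1, by omega⟩ : Fin n) : ℕ) + 1 else 0

/-- 1-based value with boundary convention `σ(0) = 0`, `σ(n+1) = ∞`. -/
def svInf (σ : Equiv.Perm (Fin n)) (k : ℕ) : ℕ :=
  if k = 0 then 0 else if k ≤ n then sv σ k else n + 1

/-- number of excedances -/
def exc (σ : Equiv.Perm (Fin n)) : ℕ := (univ.filter fun i : Fin n => i < σ i).card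

/-- number of fixed points -/
def fixc (σ : Equiv.Perm (Fin n)) : ℕ := (univ.filter fun i : Fin n => σ i = i).card

/-- number of drops -/
def dropc (σ : Equiv.Perm (Fin n)) : ℕ := (univ.filter fun i : Fin n => σ i < i).card

/-- number of inversions -/
def inv (σ : Equiv.Perm (Fin n)) : ℕ :=
  (univ.filter fun p : Fin n × Fin n => p.1 < p.2 ∧ σ p.2 < σ p.1).card

/-- number of descents -/
def des (σ : Equiv.Perm (Fin n)) : ℕ :=
  ((Icc 1 (n - 1)).filter fun i => sv σ (i + 1) < sv σ i).card

/-- number of ascents -/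
def asc (σ : Equiv.Perm (Fin n)) : ℕ :=
  ((Icc 1 (n - 1)).filter fun i => sv σ i < sv σ (i + 1)).card

/-- crossing number: pairs `(i,j)` with `j < i < σ(j) < σ(i)` or `σ(i) < σ(j) ≤ i < j` -/
def cros (σ : Equiv.Perm (Fin n)) : ℕ :=
  (univ.filter fun p : Fin n × Fin n =>
    (p.2 < p.1 ∧ p.1 < σ p.2 ∧ σ p.2 < σ p.1) ∨
    (σ p.1 < σ p.2 ∧ σ p.2 ≤ p.1 ∧ p.1 < p.2)).card

/-- nesting number: pairs `(i,j)` with `j < i < σ(i) < σ(j)` or `σ(j) < σ(i) ≤ i < j` -/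
def nest (σ : Equiv.Perm (Fin n)) : ℕ :=
  (univ.filter fun p : Fin n × Fin n =>
    (p.2 < p.1 ∧ p.1 < σ p.1 ∧ σ p.1 < σ p.2) ∨
    (σ p.2 < σ p.1 ∧ σ p.1 ≤ p.1 ∧ p.1 < p.2)).card

def icr (σ : Equiv.Perm (Fin n)) : ℕ := cros σ⁻¹

/-- number of cyclic peaks -/
def cpk (σ : Equiv.Perm (Fin n)) : ℕ :=
  (univ.filter fun x : Fin n => σ⁻¹ x < x ∧ σ x < x).card

/-- number of cyclic valleys -/
def cval (σ : Equiv.Perm (Fin n)) : ℕ :=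
  (univ.filter fun x : Fin n => x < σ⁻¹ x ∧ x < σ x).card

/-- number of double excedances -/
def cda (σ : Equiv.Perm (Fin n)) : ℕ :=
  (univ.filter fun x : Fin n => σ⁻¹ x < x ∧ x < σ x).card

/-- number of double drops -/
def cdd (σ : Equiv.Perm (Fin n)) : ℕ :=
  (univ.filter fun x : Fin n => x < σ⁻¹ x ∧ σ x < x).card

/-- number of cycles (including fixed points) -/
def cyc (σ : Equiv.Perm (Fin n)) : ℕ := σ.cycleType.card + fixc σ

/-- the star companion `σ*` of `σ`: a permutation of `{0,1,…,n}` with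
`σ*(0) = n` and `σ*(i) = σ(i) - 1` for `i ∈ [n]`. -/
def star (σ : Equiv.Perm (Fin n)) : Equiv.Perm (Fin (n + 1)) :=
  (Equiv.Perm.decomposeFin.symm (0, σ)).trans (Equiv.subRight (1 : Fin (n + 1)))

def cpkStar (σ : Equiv.Perm (Fin n)) : ℕ :=
  (univ.filter fun i : Fin (n + 1) =>
    1 ≤ (i : ℕ) ∧ (i : ℕ) < n ∧ (star σ)⁻¹ i < i ∧ star σ i < i).card

def cdaStar (σ : Equiv.Perm (Fin n)) : ℕ :=
  (univ.filter fun i : Fin (n + 1) =>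
    1 ≤ (i : ℕ) ∧ (i : ℕ) < n ∧ (star σ)⁻¹ i < i ∧ i < star σ i).card

def cddStar (σ : Equiv.Perm (Fin n)) : ℕ :=
  (univ.filter fun i : Fin (n + 1) =>
    1 ≤ (i : ℕ) ∧ (i : ℕ) < n ∧ i < (star σ)⁻¹ i ∧ star σ i < i).card

def fixStar (σ : Equiv.Perm (Fin n)) : ℕ :=
  (univ.filter fun i : Fin (n + 1) =>
    1 ≤ (i : ℕ) ∧ (i : ℕ) < n ∧ star σ i = i).card

def cycStar (σ : Equiv.Perm (Fin n)) : ℕ := cyc (star σ)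

/-- number of occurrences of the vincular pattern 31-2 -/
def p31_2 (σ : Equiv.Perm (Fin n)) : ℕ :=
  ((Icc 1 n ×ˢ Icc 1 n).filter fun p =>
    p.1 + 1 < p.2 ∧ sv σ (p.1 + 1) < sv σ p.2 ∧ sv σ p.2 < sv σ p.1).card

/-- number of occurrences of the vincular pattern 2-13 -/
def p2_13 (σ : Equiv.Perm (Fin n)) : ℕ :=
  ((Icc 1 n ×ˢ Icc 1 n).filter fun p =>
    p.2 < p.1 ∧ p.1 < n ∧ sv σ p.1 < sv σ p.2 ∧ sv σ p.2 < sv σ (p.1 + 1)).card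

/-- number of occurrences of the vincular pattern 2-31 -/
def p2_31 (σ : Equiv.Perm (Fin n)) : ℕ :=
  ((Icc 1 n ×ˢ Icc 1 n).filter fun p =>
    p.2 < p.1 ∧ p.1 < n ∧ sv σ (p.1 + 1) < sv σ p.2 ∧ sv σ p.2 < sv σ p.1).card

/-- number of peaks (convention 0--0) -/
def pk (σ : Equiv.Perm (Fin n)) : ℕ :=
  ((Icc 1 n).filter fun i => sv σ (i - 1) < sv σ i ∧ sv σ (i + 1) < sv σ i).card

/-- number of valleys (convention 0--0) -/
def vall (σ : Equiv.Perm (Fin n)) : ℕ :=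
  ((Icc 1 n).filter fun i => sv σ i < sv σ (i - 1) ∧ sv σ i < sv σ (i + 1)).card

/-- number of double ascents (convention 0--0) -/
def da (σ : Equiv.Perm (Fin n)) : ℕ :=
  ((Icc 1 n).filter fun i => sv σ (i - 1) < sv σ i ∧ sv σ i < sv σ (i + 1)).card

/-- number of double descents (convention 0--0) -/
def dd (σ : Equiv.Perm (Fin n)) : ℕ :=
  ((Icc 1 n).filter fun i => sv σ i < sv σ (i - 1) ∧ sv σ (i + 1) < sv σ i).card

/-- number of peaks (convention 0--∞) -/
def lpk (σ : Equiv.Perm (Fin n)) : ℕ :=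
  ((Icc 1 n).filter fun i => svInf σ (i - 1) < svInf σ i ∧ svInf σ (i + 1) < svInf σ i).card

/-- number of valleys (convention 0--∞) -/
def lval (σ : Equiv.Perm (Fin n)) : ℕ :=
  ((Icc 1 n).filter fun i => svInf σ i < svInf σ (i - 1) ∧ svInf σ i < svInf σ (i + 1)).card

/-- number of double ascents (convention 0--∞) -/
def lda (σ : Equiv.Perm (Fin n)) : ℕ :=
  ((Icc 1 n).filter fun i => svInf σ (i - 1) < svInf σ i ∧ svInf σ i < svInf σ (i + 1)).card

/-- number of double descents (convention 0--∞) -/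
def ldd (σ : Equiv.Perm (Fin n)) : ℕ :=
  ((Icc 1 n).filter fun i => svInf σ i < svInf σ (i - 1) ∧ svInf σ (i + 1) < svInf σ i).card

/-- number of foremaxima: double ascents (convention 0--∞) that are
left-to-right maxima -/
def fmax (σ : Equiv.Perm (Fin n)) : ℕ :=
  ((Icc 1 n).filter fun i =>
    svInf σ (i - 1) < svInf σ i ∧ svInf σ i < svInf σ (i + 1) ∧
    ∀ j ∈ Icc 1 i, sv σ j ≤ sv σ i).card

/-- `scda σ = #{i ∈ [n-1] : i < σ(i) and i+1 > σ⁻¹(i+1)}` -/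
def scda (σ : Equiv.Perm (Fin n)) : ℕ :=
  ((Icc 1 (n - 1)).filter fun i => i < sv σ i ∧ sv σ⁻¹ (i + 1) < i + 1).card

/-- `σ` avoids the pattern 321 -/
def Avoids321 (σ : Equiv.Perm (Fin n)) : Prop :=
  ¬ ∃ i j k : Fin n, i < j ∧ j < k ∧ σ k < σ j ∧ σ j < σ i

/-- `σ` avoids the pattern 231 -/
def Avoids231 (σ : Equiv.Perm (Fin n)) : Prop :=
  ¬ ∃ i j k : Fin n, i < j ∧ j < k ∧ σ k < σ i ∧ σ i < σ j

/-- `σ` avoids the pattern 312 -/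
def Avoids312 (σ : Equiv.Perm (Fin n)) : Prop :=
  ¬ ∃ i j k : Fin n, i < j ∧ j < k ∧ σ j < σ k ∧ σ k < σ i

/-- `σ` avoids the pattern 213 -/
def Avoids213 (σ : Equiv.Perm (Fin n)) : Prop :=
  ¬ ∃ i j k : Fin n, i < j ∧ j < k ∧ σ j < σ i ∧ σ i < σ k

/-- `σ` avoids the pattern 132 -/
def Avoids132 (σ : Equiv.Perm (Fin n)) : Prop :=
  ¬ ∃ i j k : Fin n, i < j ∧ j < k ∧ σ i < σ k ∧ σ k < σ j

/-- `σ` is a derangement -/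
def IsDerangement (σ : Equiv.Perm (Fin n)) : Prop := ∀ i, σ i ≠ i

/-! Signed permutations `B_n`, encoded as a pair `(σ, ε)` of an ordinary
permutation (the absolute value) together with signs attached to positions. -/

/-- number of negative values -/
def negB (ε : Fin n → Bool) : ℕ := (univ.filter fun i => ε i = true).card

/-- number of type B excedances, w.r.t. the friends order -/
def excB (σ : Equiv.Perm (Fin n)) (ε : Fin n → Bool) : ℕ :=
  (univ.filter fun i : Fin n => i < σ i ∨ (σ i = i ∧ ε i = true)).card

/-- the (1-based, signed, integer) value of the signed permutation `(σ, ε)` at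
position `k ∈ [1,n]`, with `0` outside. -/
def signedVal (σ : Equiv.Perm (Fin n)) (ε : Fin n → Bool) (k : ℕ) : ℤ :=
  if h : 1 ≤ k ∧ k ≤ n then
    (if ε ⟨k - 1, by omega⟩ then -(((σ ⟨k - 1, by omega⟩ : Fin n) : ℕ) + 1 : ℤ)
     else (((σ ⟨k - 1, by omega⟩ : Fin n) : ℕ) + 1 : ℤ))
  else 0

/-- number of type B descents -/
def desB (σ : Equiv.Perm (Fin n)) (ε : Fin n → Bool) : ℕ :=
  ((range n).filter fun i => signedVal σ ε (i + 1) < signedVal σ ε i).card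


section Dev
open Equiv

variable {a b n : ℕ}

/-- value function of the glued permutation (0-based positions and values):
positions `0..a-1` carry `A`'s values shifted by `cA`, position `a` carries `0`,
positions `a+1..a+b` carry `B`'s values shifted by `cB`. -/
def glueVal (a b cA cB : ℕ) (A : Equiv.Perm (Fin a)) (B : Equiv.Perm (Fin b)) (i : ℕ) : ℕ :=
  if h : i < a then (A ⟨i, h⟩ : ℕ) + cA
  else if i = a then 0
  else if h : i - (a+1) < b then (B ⟨i - (a+1), h⟩ : ℕ) + cB else 0

/-- the two admissible shift configurations -/
def GoodShift (a b cA cB : ℕ) : Prop := (cA = 1 ∧ cB = a + 1) ∨ (cA = b + 1 ∧ cB = 1)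

lemma glueVal_lt (hab : a + 1 + b = n) {cA cB : ℕ} (hd : GoodShift a b cA cB)
    (A : Equiv.Perm (Fin a)) (B : Equiv.Perm (Fin b)) (i : ℕ) :
    glueVal a b cA cB A B i < n := by
  unfold glueVal
  rcases hd with ⟨h1, h2⟩ | ⟨h1, h2⟩ <;>
  · split_ifs with h h' h''
    · have := (A ⟨i, h⟩).isLt; omega
    · omega
    · have := (B ⟨i - (a+1), h''⟩).isLt; omega
    · omega

lemma glueVal_injOn (hab : a + 1 + b = n) {cA cB : ℕ} (hd : GoodShift a b cA cB)
    (A : Equiv.Perm (Fin a)) (B : Equiv.Perm (Fin b)) {i j : ℕ}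
    (hi : i < n) (hj : j < n) (hij : glueVal a b cA cB A B i = glueVal a b cA cB A B j) :
    i = j := by
  unfold glueVal at hij
  have hA : ∀ k (h : k < a), (A ⟨k, h⟩ : ℕ) < a := fun k h => (A ⟨k, h⟩).isLt
  have hB : ∀ k (h : k < b), (B ⟨k, h⟩ : ℕ) < b := fun k h => (B ⟨k, h⟩).isLt
  split_ifs at hij with h1 h2 h3 h4 h5 h6 h7 h8
  -- diag cases: use injectivity; off-diag: range disjointness via omega
  all_goals first
  | (exfalso; rcases hd with ⟨c1, c2⟩ | ⟨c1, c2⟩ <;>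
      first
      | (have := hA i h1; have := hB (j - (a+1)) ‹_›; omega)
      | (have := hA j ‹_›; have := hB (i - (a+1)) ‹_›; omega)
      | (have := hA i h1; omega)
      | (have := hA j ‹_›; omega)
      | (have := hB (i - (a+1)) ‹_›; omega)
      | (have := hB (j - (a+1)) ‹_›; omega)
      | omega)
  | omega
  | (rcases hd with ⟨c1, c2⟩ | ⟨c1, c2⟩ <;>
     · have h' : (A ⟨i, h1⟩ : ℕ) = (A ⟨j, ‹_›⟩ : ℕ) := by omega
       have := A.injective (Fin.val_injective h')
       simpa using congrArg Fin.val this)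
  | (rcases hd with ⟨c1, c2⟩ | ⟨c1, c2⟩ <;>
     · have h' : (B ⟨i - (a+1), ‹_›⟩ : ℕ) = (B ⟨j - (a+1), ‹_›⟩ : ℕ) := by omega
       have := B.injective (Fin.val_injective h')
       have := congrArg Fin.val this
       simp only [] at this
       omega)

end Dev
section Dev2
open Equiv

variable {a b n : ℕ}

/-- the glued permutation -/
def glue (hab : a + 1 + b = n) {cA cB : ℕ} (hd : GoodShift a b cA cB)
    (A : Equiv.Perm (Fin a)) (B : Equiv.Perm (Fin b)) : Equiv.Perm (Fin n) :=
  Equiv.ofBijective (fun i => ⟨glueVal a b cA cB A B i, glueVal_lt hab hd A B i⟩)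
    ((Finite.injective_iff_bijective).1 (fun i j hij => by
      apply Fin.val_injective
      exact glueVal_injOn hab hd A B i.isLt j.isLt (congrArg Fin.val hij)))

lemma glue_apply (hab : a + 1 + b = n) {cA cB : ℕ} (hd : GoodShift a b cA cB)
    (A : Equiv.Perm (Fin a)) (B : Equiv.Perm (Fin b)) (i : Fin n) :
    (glue hab hd A B i : ℕ) = glueVal a b cA cB A B i := rfl

lemma sv_zero {σ : Equiv.Perm (Fin n)} {k : ℕ} (h : ¬ (1 ≤ k ∧ k ≤ n)) : sv σ k = 0 := by
  unfold sv; rw [dif_neg h]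

lemma sv_pos {σ : Equiv.Perm (Fin n)} {k : ℕ} (h1 : 1 ≤ k) (h2 : k ≤ n) :
    1 ≤ sv σ k ∧ sv σ k ≤ n := by
  unfold sv; rw [dif_pos ⟨h1, h2⟩]
  exact ⟨Nat.le_add_left _ _, (σ _).isLt⟩

lemma sv_glue_A (hab : a + 1 + b = n) {cA cB : ℕ} (hd : GoodShift a b cA cB)
    (A : Equiv.Perm (Fin a)) (B : Equiv.Perm (Fin b)) {i : ℕ} (h1 : 1 ≤ i) (h2 : i ≤ a) :
    sv (glue hab hd A B) i = sv A i + cA := by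
  unfold sv
  rw [dif_pos ⟨h1, by omega⟩, dif_pos ⟨h1, h2⟩]
  have : (glue hab hd A B ⟨i - 1, by omega⟩ : ℕ) = glueVal a b cA cB A B (i - 1) := rfl
  rw [this]
  unfold glueVal
  rw [dif_pos (by omega : i - 1 < a)]
  ring

lemma sv_glue_mid (hab : a + 1 + b = n) {cA cB : ℕ} (hd : GoodShift a b cA cB)
    (A : Equiv.Perm (Fin a)) (B : Equiv.Perm (Fin b)) :
    sv (glue hab hd A B) (a + 1) = 1 := by
  unfold sv
  rw [dif_pos ⟨by omega, by omega⟩]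
  have : (glue hab hd A B ⟨a + 1 - 1, by omega⟩ : ℕ) = glueVal a b cA cB A B a := by
    simp [glue_apply]
  rw [this]
  unfold glueVal
  rw [dif_neg (by omega), if_pos rfl]

lemma sv_glue_B (hab : a + 1 + b = n) {cA cB : ℕ} (hd : GoodShift a b cA cB)
    (A : Equiv.Perm (Fin a)) (B : Equiv.Perm (Fin b)) {j : ℕ} (h1 : 1 ≤ j) (h2 : j ≤ b) :
    sv (glue hab hd A B) (a + 1 + j) = sv B j + cB := by
  unfold sv
  rw [dif_pos ⟨by omega, by omega⟩, dif_pos ⟨h1, h2⟩]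
  show glueVal a b cA cB A B (a + 1 + j - 1) + 1 = _
  unfold glueVal
  rw [dif_neg (by omega), if_neg (by omega),
    dif_pos (show a + 1 + j - 1 - (a+1) < b by omega)]
  have key : ∀ (x y : ℕ) (hx : x < b) (hy : y < b), x = y →
      (B ⟨x, hx⟩ : ℕ) = B ⟨y, hy⟩ := by
    intro x y hx hy h; subst h; rfl
  have := key (a + 1 + j - 1 - (a+1)) (j - 1) (by omega) (by omega) (by omega)
  omega

end Dev2
section Dev3
open Equiv Finset

variable {a b n : ℕ}

lemma des_eq_sum (σ : Equiv.Perm (Fin n)) :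
    des σ = ∑ i ∈ Ico 1 n, (if sv σ (i + 1) < sv σ i then 1 else 0) := by
  rw [des, card_filter]
  congr 1

lemma vall_eq_sum (σ : Equiv.Perm (Fin n)) :
    vall σ = ∑ i ∈ Ico 1 (n + 1),
      (if sv σ i < sv σ (i - 1) ∧ sv σ i < sv σ (i + 1) then 1 else 0) := by
  rw [vall, card_filter, ← Finset.Ico_add_one_right_eq_Icc]

lemma des_glue (hab : a + 1 + b = n) {cA cB : ℕ} (hd : GoodShift a b cA cB)
    (A : Equiv.Perm (Fin a)) (B : Equiv.Perm (Fin b)) :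
    des (glue hab hd A B) = des A + des B + (if a = 0 then 0 else 1) := by
  have hcA : 1 ≤ cA := by rcases hd with ⟨h1, _⟩ | ⟨h1, _⟩ <;> omega
  have hcB : 1 ≤ cB := by rcases hd with ⟨_, h2⟩ | ⟨_, h2⟩ <;> omega
  rw [des_eq_sum, des_eq_sum (n := a) A, des_eq_sum (n := b) B]
  have hsplit := Finset.sum_Ico_consecutive
    (f := fun i => if sv (glue hab hd A B) (i + 1) < sv (glue hab hd A B) i then 1 else 0)
    (by omega : 1 ≤ a + 1) (by omega : a + 1 ≤ n)
  rw [← hsplit]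
  -- head part
  have head : ∑ i ∈ Ico 1 (a + 1), (if sv (glue hab hd A B) (i + 1) < sv (glue hab hd A B) i then 1 else 0)
      = (∑ i ∈ Ico 1 a, (if sv A (i + 1) < sv A i then 1 else 0))
        + (if a = 0 then 0 else 1) := by
    rcases Nat.eq_zero_or_pos a with ha | ha
    · subst ha; simp
    · rw [Finset.sum_Ico_succ_top (by omega : 1 ≤ a), if_neg (show ¬ a = 0 by omega)]
      congr 1
      · apply Finset.sum_congr rfl
        intro i hi
        simp only [Finset.mem_Ico] at hi
        rw [sv_glue_A hab hd A B (by omega) (by omega),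
          sv_glue_A hab hd A B (by omega) (by omega)]
        simp only [Nat.add_lt_add_iff_right]
      · have h1 : sv (glue hab hd A B) (a + 1) = 1 := sv_glue_mid hab hd A B
        have h2 := sv_glue_A hab hd A B (i := a) (by omega) (le_refl a)
        have h3 := (sv_pos (σ := A) (k := a) (by omega) (le_refl a)).1
        rw [if_pos (by omega)]
  rw [head]
  -- tail part
  have tail : ∑ i ∈ Ico (a + 1) n, (if sv (glue hab hd A B) (i + 1) < sv (glue hab hd A B) i then 1 else 0)
      = ∑ i ∈ Ico 1 b, (if sv B (i + 1) < sv B i then 1 else 0) := by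
    rw [Finset.sum_Ico_eq_sum_range]
    have hb : n - (a + 1) = b := by omega
    rw [hb]
    rcases Nat.eq_zero_or_pos b with hb0 | hb0
    · subst hb0; simp
    · obtain ⟨b', rfl⟩ : ∃ b', b = b' + 1 := ⟨b - 1, by omega⟩
      rw [Finset.sum_range_succ']
      have h0 : (if sv (glue hab hd A B) (a + 1 + 0 + 1) < sv (glue hab hd A B) (a + 1 + 0) then 1 else 0) = 0 := by
        have h1 : sv (glue hab hd A B) (a + 1) = 1 := sv_glue_mid hab hd A B
        have h2 := sv_glue_B hab hd A B (j := 1) (by omega) (by omega)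
        have h3 := (sv_pos (σ := B) (k := 1) (by omega) (by omega)).1
        have : a + 1 + 0 + 1 = a + 1 + 1 := by omega
        rw [this, h2]
        simp only [Nat.add_zero]
        rw [h1, if_neg (show ¬ (sv B 1 + cB < 1) by omega)]
      rw [h0, Nat.add_zero]
      rw [Finset.sum_Ico_eq_sum_range]
      apply Finset.sum_congr (by norm_num)
      intro i hi
      simp only [Finset.mem_range] at hi
      rw [show (1 : ℕ) + i = i + 1 by omega,
          show a + 1 + (i + 1) + 1 = a + 1 + (i + 1 + 1) by omega,
          sv_glue_B hab hd A B (by omega) (by omega : i + 1 + 1 ≤ b' + 1),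
          sv_glue_B hab hd A B (by omega) (by omega : i + 1 ≤ b' + 1)]
      simp only [Nat.add_lt_add_iff_right]
  rw [tail]
  ring

end Dev3
section Dev4
open Equiv Finset

variable {a b n : ℕ}

lemma vall_glue (hab : a + 1 + b = n) {cA cB : ℕ} (hd : GoodShift a b cA cB)
    (A : Equiv.Perm (Fin a)) (B : Equiv.Perm (Fin b)) :
    vall (glue hab hd A B) = vall A + vall B +
      (if a ≠ 0 ∧ b ≠ 0 then 1 else 0) := by
  have hcA : 1 ≤ cA := by rcases hd with ⟨h1, _⟩ | ⟨h1, _⟩ <;> omega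
  have hcB : 1 ≤ cB := by rcases hd with ⟨_, h2⟩ | ⟨_, h2⟩ <;> omega
  rw [vall_eq_sum, vall_eq_sum (n := a) A, vall_eq_sum (n := b) B]
  rw [← Finset.sum_Ico_consecutive
    (f := fun i => if sv (glue hab hd A B) i < sv (glue hab hd A B) (i - 1) ∧
        sv (glue hab hd A B) i < sv (glue hab hd A B) (i + 1) then 1 else 0)
    (by omega : 1 ≤ a + 1) (by omega : a + 1 ≤ n + 1)]
  have head : ∑ i ∈ Ico 1 (a + 1),
      (if sv (glue hab hd A B) i < sv (glue hab hd A B) (i - 1) ∧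
        sv (glue hab hd A B) i < sv (glue hab hd A B) (i + 1) then 1 else 0)
      = ∑ i ∈ Ico 1 (a + 1), (if sv A i < sv A (i - 1) ∧ sv A i < sv A (i + 1) then 1 else 0) := by
    apply Finset.sum_congr rfl
    intro i hi
    simp only [Finset.mem_Ico] at hi
    have e0 : sv (glue hab hd A B) i = sv A i + cA :=
      sv_glue_A hab hd A B (by omega) (by omega)
    have epos := sv_pos (σ := A) (k := i) (by omega) (by omega)
    have el : i = 1 ∧ sv (glue hab hd A B) (i-1) = 0 ∧ sv A (i-1) = 0 ∨
        2 ≤ i ∧ sv (glue hab hd A B) (i-1) = sv A (i-1) + cA := by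
      rcases Nat.lt_or_ge i 2 with h | h
      · exact Or.inl ⟨by omega, by
          rw [show i - 1 = 0 by omega]; exact sv_zero (by omega), by
          rw [show i - 1 = 0 by omega]; exact sv_zero (by omega)⟩
      · exact Or.inr ⟨h, sv_glue_A hab hd A B (by omega) (by omega)⟩
    have er : i = a ∧ sv (glue hab hd A B) (i+1) = 1 ∧ sv A (i+1) = 0 ∨
        i < a ∧ sv (glue hab hd A B) (i+1) = sv A (i+1) + cA := by
      rcases Nat.lt_or_ge i a with h | h
      · exact Or.inr ⟨h, sv_glue_A hab hd A B (by omega) (by omega)⟩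
      · refine Or.inl ⟨by omega, ?_, sv_zero (by omega)⟩
        rw [show i + 1 = a + 1 by omega]; exact sv_glue_mid hab hd A B
    exact if_congr (by omega) rfl rfl
  rw [head]
  have tail : ∑ i ∈ Ico (a + 1) (n + 1),
      (if sv (glue hab hd A B) i < sv (glue hab hd A B) (i - 1) ∧
        sv (glue hab hd A B) i < sv (glue hab hd A B) (i + 1) then 1 else 0)
      = (∑ i ∈ Ico 1 (b + 1), (if sv B i < sv B (i - 1) ∧ sv B i < sv B (i + 1) then 1 else 0))
        + (if a ≠ 0 ∧ b ≠ 0 then 1 else 0) := by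
    rw [Finset.sum_Ico_eq_sum_range, show n + 1 - (a + 1) = b + 1 by omega,
      Finset.sum_range_succ']
    congr 1
    · -- shifted B part
      rw [Finset.sum_Ico_eq_sum_range, show b + 1 - 1 = b by norm_num]
      apply Finset.sum_congr rfl
      intro i hi
      simp only [Finset.mem_range] at hi
      have e0 : sv (glue hab hd A B) (a + 1 + (i + 1)) = sv B (i + 1) + cB :=
        sv_glue_B hab hd A B (by omega) (by omega)
      have epos := sv_pos (σ := B) (k := i + 1) (by omega) (by omega)
      have el : i = 0 ∧ sv (glue hab hd A B) (a + 1 + (i + 1) - 1) = 1 ∧ sv B (i + 1 - 1) = 0 ∨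
          1 ≤ i ∧ sv (glue hab hd A B) (a + 1 + (i + 1) - 1) = sv B (i + 1 - 1) + cB := by
        rcases Nat.eq_zero_or_pos i with h | h
        · subst h
          refine Or.inl ⟨rfl, ?_, sv_zero (by omega)⟩
          rw [show a + 1 + (0 + 1) - 1 = a + 1 by omega]
          exact sv_glue_mid hab hd A B
        · refine Or.inr ⟨h, ?_⟩
          rw [show a + 1 + (i + 1) - 1 = a + 1 + i by omega,
            show i + 1 - 1 = i by omega]
          exact sv_glue_B hab hd A B (by omega) (by omega)
      have er : i + 1 = b ∧ sv (glue hab hd A B) (a + 1 + (i + 1) + 1) = 0 ∧ sv B (i + 1 + 1) = 0 ∨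
          i + 1 < b ∧ sv (glue hab hd A B) (a + 1 + (i + 1) + 1) = sv B (i + 1 + 1) + cB := by
        rcases Nat.lt_or_ge (i + 1) b with h | h
        · refine Or.inr ⟨h, ?_⟩
          rw [show a + 1 + (i + 1) + 1 = a + 1 + (i + 1 + 1) by omega]
          exact sv_glue_B hab hd A B (by omega) (by omega)
        · exact Or.inl ⟨by omega, sv_zero (by omega), sv_zero (by omega)⟩
      rw [show (1:ℕ) + i = i + 1 by omega]
      exact if_congr (by omega) rfl rfl
    · -- middle term
      have e0 : sv (glue hab hd A B) (a + 1 + 0) = 1 := by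
        rw [show a + 1 + 0 = a + 1 by omega]; exact sv_glue_mid hab hd A B
      have el : a = 0 ∧ sv (glue hab hd A B) (a + 1 + 0 - 1) = 0 ∨
          1 ≤ a ∧ 2 ≤ sv (glue hab hd A B) (a + 1 + 0 - 1) := by
        rcases Nat.eq_zero_or_pos a with h | h
        · exact Or.inl ⟨h, by subst h; exact sv_zero (by omega)⟩
        · refine Or.inr ⟨h, ?_⟩
          have := sv_glue_A hab hd A B (i := a) (by omega) (le_refl a)
          have h2 := sv_pos (σ := A) (k := a) (by omega) (le_refl a)
          rw [show a + 1 + 0 - 1 = a by omega]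
          omega
      have er : b = 0 ∧ sv (glue hab hd A B) (a + 1 + 0 + 1) = 0 ∨
          1 ≤ b ∧ 2 ≤ sv (glue hab hd A B) (a + 1 + 0 + 1) := by
        rcases Nat.eq_zero_or_pos b with h | h
        · exact Or.inl ⟨h, sv_zero (by omega)⟩
        · refine Or.inr ⟨h, ?_⟩
          have := sv_glue_B hab hd A B (j := 1) (by omega) (by omega)
          have h2 := sv_pos (σ := B) (k := 1) (by omega) (by omega)
          rw [show a + 1 + 0 + 1 = a + 1 + 1 by omega]
          omega
      exact if_congr (by omega) rfl rfl
  rw [tail]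
  ring

end Dev4
section Dev5
open Equiv Finset

variable {a b n : ℕ}

lemma p2_13_eq_sum (σ : Equiv.Perm (Fin n)) :
    p2_13 σ = ∑ i ∈ Ico 1 (n + 1), ∑ j ∈ Ico 1 (n + 1),
      (if j < i ∧ i < n ∧ sv σ i < sv σ j ∧ sv σ j < sv σ (i + 1) then 1 else 0) := by
  rw [p2_13, card_filter, Finset.sum_product]
  rfl

lemma p2_13_glue (hab : a + 1 + b = n) {cA cB : ℕ} (hd : GoodShift a b cA cB)
    (hL : cA = 1 ∧ cB = a + 1)
    (A : Equiv.Perm (Fin a)) (B : Equiv.Perm (Fin b)) :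
    p2_13 (glue hab hd A B) = p2_13 A + p2_13 B + (if b = 0 then 0 else a) := by
  obtain ⟨hc1, hc2⟩ := hL
  subst hc1; subst hc2
  rw [p2_13_eq_sum, p2_13_eq_sum (n := a) A, p2_13_eq_sum (n := b) B]
  rw [← Finset.sum_Ico_consecutive
    (f := fun i => ∑ j ∈ Ico 1 (n + 1),
      (if j < i ∧ i < n ∧ sv (glue hab hd A B) i < sv (glue hab hd A B) j ∧
        sv (glue hab hd A B) j < sv (glue hab hd A B) (i + 1) then 1 else 0))
    (by omega : 1 ≤ a + 1) (by omega : a + 1 ≤ n + 1)]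
  have head : ∀ i ∈ Ico 1 (a + 1), (∑ j ∈ Ico 1 (n + 1),
      (if j < i ∧ i < n ∧ sv (glue hab hd A B) i < sv (glue hab hd A B) j ∧
        sv (glue hab hd A B) j < sv (glue hab hd A B) (i + 1) then 1 else 0))
      = ∑ j ∈ Ico 1 (a + 1),
        (if j < i ∧ i < a ∧ sv A i < sv A j ∧ sv A j < sv A (i + 1) then 1 else 0) := by
    intro i hi
    simp only [Finset.mem_Ico] at hi
    rw [← Finset.sum_Ico_consecutive
      (f := fun j => (if j < i ∧ i < n ∧ sv (glue hab hd A B) i < sv (glue hab hd A B) j ∧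
        sv (glue hab hd A B) j < sv (glue hab hd A B) (i + 1) then 1 else 0))
      (by omega : 1 ≤ a + 1) (by omega : a + 1 ≤ n + 1)]
    have t2 : ∑ j ∈ Ico (a + 1) (n + 1),
        (if j < i ∧ i < n ∧ sv (glue hab hd A B) i < sv (glue hab hd A B) j ∧
          sv (glue hab hd A B) j < sv (glue hab hd A B) (i + 1) then 1 else 0) = 0 := by
      apply Finset.sum_eq_zero
      intro j hj
      simp only [Finset.mem_Ico] at hj
      rw [if_neg (by omega)]
    rw [t2, Nat.add_zero]
    apply Finset.sum_congr rfl
    intro j hj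
    simp only [Finset.mem_Ico] at hj
    have f1 : sv (glue hab hd A B) i = sv A i + 1 := sv_glue_A hab hd A B (by omega) (by omega)
    have f2 : sv (glue hab hd A B) j = sv A j + 1 := sv_glue_A hab hd A B (by omega) (by omega)
    have f4 := sv_pos (σ := A) (k := j) (by omega) (by omega)
    have f3 : (i < a ∧ sv (glue hab hd A B) (i + 1) = sv A (i + 1) + 1) ∨
        (i = a ∧ sv (glue hab hd A B) (i + 1) = 1 ∧ sv A (i + 1) = 0) := by
      rcases Nat.lt_or_ge i a with h | h
      · exact Or.inl ⟨h, sv_glue_A hab hd A B (by omega) (by omega)⟩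
      · refine Or.inr ⟨by omega, ?_, sv_zero (by omega)⟩
        rw [show i + 1 = a + 1 by omega]; exact sv_glue_mid hab hd A B
    exact if_congr (by omega) rfl rfl
  rw [Finset.sum_congr rfl head]
  have tail : ∑ i ∈ Ico (a + 1) (n + 1), (∑ j ∈ Ico 1 (n + 1),
      (if j < i ∧ i < n ∧ sv (glue hab hd A B) i < sv (glue hab hd A B) j ∧
        sv (glue hab hd A B) j < sv (glue hab hd A B) (i + 1) then 1 else 0))
      = (∑ i ∈ Ico 1 (b + 1), ∑ j ∈ Ico 1 (b + 1),
          (if j < i ∧ i < b ∧ sv B i < sv B j ∧ sv B j < sv B (i + 1) then 1 else 0))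
        + (if b = 0 then 0 else a) := by
    rw [Finset.sum_Ico_eq_sum_range, show n + 1 - (a + 1) = b + 1 by omega,
      Finset.sum_range_succ']
    congr 1
    · -- the B block: i = a+1+(k+1)
      rw [Finset.sum_Ico_eq_sum_range, show b + 1 - 1 = b by norm_num]
      apply Finset.sum_congr rfl
      intro k hk
      simp only [Finset.mem_range] at hk
      -- split inner j-sum
      rw [← Finset.sum_Ico_consecutive
        (f := fun j => (if j < a + 1 + (k + 1) ∧ a + 1 + (k + 1) < n ∧
          sv (glue hab hd A B) (a + 1 + (k + 1)) < sv (glue hab hd A B) j ∧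
          sv (glue hab hd A B) j < sv (glue hab hd A B) (a + 1 + (k + 1) + 1) then 1 else 0))
        (by omega : 1 ≤ a + 1) (by omega : a + 1 ≤ n + 1)]
      have g1 : sv (glue hab hd A B) (a + 1 + (k + 1)) = sv B (k + 1) + (a + 1) :=
        sv_glue_B hab hd A B (by omega) (by omega)
      have g4 := sv_pos (σ := B) (k := k + 1) (by omega) (by omega)
      have hz : ∑ j ∈ Ico 1 (a + 1),
          (if j < a + 1 + (k + 1) ∧ a + 1 + (k + 1) < n ∧
            sv (glue hab hd A B) (a + 1 + (k + 1)) < sv (glue hab hd A B) j ∧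
            sv (glue hab hd A B) j < sv (glue hab hd A B) (a + 1 + (k + 1) + 1) then 1 else 0) = 0 := by
        apply Finset.sum_eq_zero
        intro j hj
        simp only [Finset.mem_Ico] at hj
        have f2 : sv (glue hab hd A B) j = sv A j + 1 :=
          sv_glue_A hab hd A B (by omega) (by omega)
        have f4 := sv_pos (σ := A) (k := j) (by omega) (by omega)
        rw [if_neg (by omega)]
      rw [hz, Nat.zero_add, Finset.sum_Ico_eq_sum_range,
        show n + 1 - (a + 1) = b + 1 by omega, Finset.sum_range_succ']
      have hmid : (if a + 1 + 0 < a + 1 + (k + 1) ∧ a + 1 + (k + 1) < n ∧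
          sv (glue hab hd A B) (a + 1 + (k + 1)) < sv (glue hab hd A B) (a + 1 + 0) ∧
          sv (glue hab hd A B) (a + 1 + 0) < sv (glue hab hd A B) (a + 1 + (k + 1) + 1)
          then 1 else 0) = 0 := by
        have e0 : sv (glue hab hd A B) (a + 1 + 0) = 1 := by
          simpa using sv_glue_mid hab hd A B
        rw [if_neg (by omega)]
      rw [hmid, Nat.add_zero]
      -- now match with inner sum of B at position k+1
      rw [show (1 : ℕ) + k = k + 1 by omega]
      rw [Finset.sum_Ico_eq_sum_range (f := fun j =>
        (if j < k + 1 ∧ k + 1 < b ∧ sv B (k + 1) < sv B j ∧ sv B j < sv B (k + 1 + 1) then 1 else 0)),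
        show b + 1 - 1 = b by norm_num]
      apply Finset.sum_congr rfl
      intro l hl
      simp only [Finset.mem_range] at hl
      have g2 : sv (glue hab hd A B) (a + 1 + (l + 1)) = sv B (l + 1) + (a + 1) :=
        sv_glue_B hab hd A B (by omega) (by omega)
      have g5 := sv_pos (σ := B) (k := l + 1) (by omega) (by omega)
      have g3 : (k + 1 < b ∧ sv (glue hab hd A B) (a + 1 + (k + 1) + 1) = sv B (k + 1 + 1) + (a + 1)) ∨
          (k + 1 = b) := by
        rcases Nat.lt_or_ge (k + 1) b with h | h
        · refine Or.inl ⟨h, ?_⟩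
          rw [show a + 1 + (k + 1) + 1 = a + 1 + (k + 1 + 1) by omega]
          exact sv_glue_B hab hd A B (by omega) (by omega)
        · exact Or.inr (by omega)
      rw [show (1 : ℕ) + l = l + 1 by omega]
      exact if_congr (by omega) rfl rfl
    · -- the middle outer term i = a+1
      have e0 : sv (glue hab hd A B) (a + 1 + 0) = 1 := by
        simpa using sv_glue_mid hab hd A B
      rcases Nat.eq_zero_or_pos b with hb | hb
    -- b = 0 case: i < n fails
      · rw [if_pos (by omega : b = 0)]
        apply Finset.sum_eq_zero
        intro j hj
        rw [if_neg (by omega)]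
      · rw [if_neg (by omega : ¬ b = 0)]
        rw [← Finset.sum_Ico_consecutive
          (f := fun j => (if j < a + 1 + 0 ∧ a + 1 + 0 < n ∧
            sv (glue hab hd A B) (a + 1 + 0) < sv (glue hab hd A B) j ∧
            sv (glue hab hd A B) j < sv (glue hab hd A B) (a + 1 + 0 + 1) then 1 else 0))
          (by omega : 1 ≤ a + 1) (by omega : a + 1 ≤ n + 1)]
        have hz2 : ∑ j ∈ Ico (a + 1) (n + 1),
            (if j < a + 1 + 0 ∧ a + 1 + 0 < n ∧
              sv (glue hab hd A B) (a + 1 + 0) < sv (glue hab hd A B) j ∧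
              sv (glue hab hd A B) j < sv (glue hab hd A B) (a + 1 + 0 + 1) then 1 else 0) = 0 := by
          apply Finset.sum_eq_zero
          intro j hj
          simp only [Finset.mem_Ico] at hj
          rw [if_neg (by omega)]
        rw [hz2, Nat.add_zero]
        have hone : ∀ j ∈ Ico 1 (a + 1),
            (if j < a + 1 + 0 ∧ a + 1 + 0 < n ∧
              sv (glue hab hd A B) (a + 1 + 0) < sv (glue hab hd A B) j ∧
              sv (glue hab hd A B) j < sv (glue hab hd A B) (a + 1 + 0 + 1) then 1 else 0) = 1 := by
          intro j hj
          simp only [Finset.mem_Ico] at hj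
          have f2 : sv (glue hab hd A B) j = sv A j + 1 :=
            sv_glue_A hab hd A B (by omega) (by omega)
          have f4 := sv_pos (σ := A) (k := j) (by omega) (by omega)
          have f5 : sv (glue hab hd A B) (a + 1 + 0 + 1) = sv B 1 + (a + 1) := by
            simpa using sv_glue_B hab hd A B (j := 1) (by omega) (by omega)
          have f6 := sv_pos (σ := B) (k := 1) (by omega) (by omega)
          rw [if_pos (by omega)]
        rw [Finset.sum_congr rfl hone, Finset.sum_const, Nat.card_Ico, smul_eq_mul]
        omega
  rw [tail]
  ring

end Dev5
section Dev6
open Equiv Finset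

variable {a b n : ℕ}

lemma p31_2_eq_sum (σ : Equiv.Perm (Fin n)) :
    p31_2 σ = ∑ i ∈ Ico 1 (n + 1), ∑ j ∈ Ico 1 (n + 1),
      (if i + 1 < j ∧ sv σ (i + 1) < sv σ j ∧ sv σ j < sv σ i then 1 else 0) := by
  rw [p31_2, card_filter, Finset.sum_product]
  rfl

lemma p31_2_glue (hab : a + 1 + b = n) {cA cB : ℕ} (hd : GoodShift a b cA cB)
    (hH : cA = b + 1 ∧ cB = 1)
    (A : Equiv.Perm (Fin a)) (B : Equiv.Perm (Fin b)) :
    p31_2 (glue hab hd A B) = p31_2 A + p31_2 B + (if a = 0 then 0 else b) := by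
  obtain ⟨hc1, hc2⟩ := hH
  subst hc1; subst hc2
  rw [p31_2_eq_sum, p31_2_eq_sum (n := a) A, p31_2_eq_sum (n := b) B]
  rw [← Finset.sum_Ico_consecutive
    (f := fun i => ∑ j ∈ Ico 1 (n + 1),
      (if i + 1 < j ∧ sv (glue hab hd A B) (i + 1) < sv (glue hab hd A B) j ∧
        sv (glue hab hd A B) j < sv (glue hab hd A B) i then 1 else 0))
    (by omega : 1 ≤ a + 1) (by omega : a + 1 ≤ n + 1)]
  have head : ∑ i ∈ Ico 1 (a + 1), (∑ j ∈ Ico 1 (n + 1),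
      (if i + 1 < j ∧ sv (glue hab hd A B) (i + 1) < sv (glue hab hd A B) j ∧
        sv (glue hab hd A B) j < sv (glue hab hd A B) i then 1 else 0))
      = (∑ i ∈ Ico 1 (a + 1), ∑ j ∈ Ico 1 (a + 1),
          (if i + 1 < j ∧ sv A (i + 1) < sv A j ∧ sv A j < sv A i then 1 else 0))
        + (if a = 0 then 0 else b) := by
    rcases Nat.eq_zero_or_pos a with ha | ha
    · subst ha; simp
    · rw [if_neg (show ¬ a = 0 by omega),
        Finset.sum_Ico_succ_top (by omega : 1 ≤ a),
        Finset.sum_Ico_succ_top (f := fun i => ∑ j ∈ Ico 1 (a + 1),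
          (if i + 1 < j ∧ sv A (i + 1) < sv A j ∧ sv A j < sv A i then 1 else 0))
          (by omega : 1 ≤ a)]
      have part1 : ∀ i ∈ Ico 1 a, (∑ j ∈ Ico 1 (n + 1),
          (if i + 1 < j ∧ sv (glue hab hd A B) (i + 1) < sv (glue hab hd A B) j ∧
            sv (glue hab hd A B) j < sv (glue hab hd A B) i then 1 else 0))
          = ∑ j ∈ Ico 1 (a + 1),
            (if i + 1 < j ∧ sv A (i + 1) < sv A j ∧ sv A j < sv A i then 1 else 0) := by
        intro i hi
        simp only [Finset.mem_Ico] at hi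
        rw [← Finset.sum_Ico_consecutive
          (f := fun j => (if i + 1 < j ∧ sv (glue hab hd A B) (i + 1) < sv (glue hab hd A B) j ∧
            sv (glue hab hd A B) j < sv (glue hab hd A B) i then 1 else 0))
          (by omega : 1 ≤ a + 1) (by omega : a + 1 ≤ n + 1)]
        have f1 : sv (glue hab hd A B) i = sv A i + (b + 1) :=
          sv_glue_A hab hd A B (by omega) (by omega)
        have f3 : sv (glue hab hd A B) (i + 1) = sv A (i + 1) + (b + 1) :=
          sv_glue_A hab hd A B (by omega) (by omega)
        have t2 : ∑ j ∈ Ico (a + 1) (n + 1),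
            (if i + 1 < j ∧ sv (glue hab hd A B) (i + 1) < sv (glue hab hd A B) j ∧
              sv (glue hab hd A B) j < sv (glue hab hd A B) i then 1 else 0) = 0 := by
          apply Finset.sum_eq_zero
          intro j hj
          simp only [Finset.mem_Ico] at hj
          have g2 : (j = a + 1 ∧ sv (glue hab hd A B) j = 1) ∨
              (a + 1 < j ∧ sv (glue hab hd A B) j = sv B (j - (a + 1)) + 1 ∧
                sv B (j - (a + 1)) ≤ b) := by
            rcases Nat.eq_or_lt_of_le hj.1 with h | h
            · exact Or.inl ⟨h.symm, by rw [← h]; exact sv_glue_mid hab hd A B⟩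
            · refine Or.inr ⟨h, ?_, (sv_pos (σ := B) (k := j - (a+1)) (by omega) (by omega)).2⟩
              rw [show j = a + 1 + (j - (a + 1)) by omega]
              rw [sv_glue_B hab hd A B (by omega) (by omega)]
              rw [show a + 1 + (j - (a + 1)) - (a + 1) = j - (a + 1) by omega]
          rw [if_neg (by omega)]
        rw [t2, Nat.add_zero]
        apply Finset.sum_congr rfl
        intro j hj
        simp only [Finset.mem_Ico] at hj
        have f2 : sv (glue hab hd A B) j = sv A j + (b + 1) :=
          sv_glue_A hab hd A B (by omega) (by omega)
        exact if_congr (by omega) rfl rfl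
      have topA : ∑ j ∈ Ico 1 (a + 1),
          (if a + 1 < j ∧ sv A (a + 1) < sv A j ∧ sv A j < sv A a then 1 else 0) = 0 := by
        apply Finset.sum_eq_zero
        intro j hj
        simp only [Finset.mem_Ico] at hj
        rw [if_neg (by omega)]
      rw [Finset.sum_congr rfl part1, topA, Nat.add_zero]
      congr 1
      rw [← Finset.sum_Ico_consecutive
        (f := fun j => (if a + 1 < j ∧ sv (glue hab hd A B) (a + 1) < sv (glue hab hd A B) j ∧
          sv (glue hab hd A B) j < sv (glue hab hd A B) a then 1 else 0))
        (by omega : 1 ≤ a + 1) (by omega : a + 1 ≤ n + 1)]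
      have z1 : ∑ j ∈ Ico 1 (a + 1),
          (if a + 1 < j ∧ sv (glue hab hd A B) (a + 1) < sv (glue hab hd A B) j ∧
            sv (glue hab hd A B) j < sv (glue hab hd A B) a then 1 else 0) = 0 := by
        apply Finset.sum_eq_zero
        intro j hj
        simp only [Finset.mem_Ico] at hj
        rw [if_neg (by omega)]
      rw [z1, Nat.zero_add, Finset.sum_Ico_eq_sum_range,
        show n + 1 - (a + 1) = b + 1 by omega, Finset.sum_range_succ']
      have e0 : sv (glue hab hd A B) (a + 1) = 1 := sv_glue_mid hab hd A B
      have zmid : (if a + 1 < a + 1 + 0 ∧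
          sv (glue hab hd A B) (a + 1) < sv (glue hab hd A B) (a + 1 + 0) ∧
          sv (glue hab hd A B) (a + 1 + 0) < sv (glue hab hd A B) a then 1 else 0) = 0 := by
        rw [if_neg (by omega)]
      rw [zmid, Nat.add_zero]
      have hones : ∀ l ∈ range b, (if a + 1 < a + 1 + (l + 1) ∧
          sv (glue hab hd A B) (a + 1) < sv (glue hab hd A B) (a + 1 + (l + 1)) ∧
          sv (glue hab hd A B) (a + 1 + (l + 1)) < sv (glue hab hd A B) a then 1 else 0) = 1 := by
        intro l hl
        simp only [Finset.mem_range] at hl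
        have g2 : sv (glue hab hd A B) (a + 1 + (l + 1)) = sv B (l + 1) + 1 :=
          sv_glue_B hab hd A B (by omega) (by omega)
        have g5 := sv_pos (σ := B) (k := l + 1) (by omega) (by omega)
        have f1 : sv (glue hab hd A B) a = sv A a + (b + 1) :=
          sv_glue_A hab hd A B (by omega) (by omega)
        have f4 := sv_pos (σ := A) (k := a) (by omega) (by omega)
        rw [if_pos (by omega)]
      rw [Finset.sum_congr rfl hones, Finset.sum_const, Finset.card_range, smul_eq_mul]
      omega
  rw [head]
  have tail : ∑ i ∈ Ico (a + 1) (n + 1), (∑ j ∈ Ico 1 (n + 1),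
      (if i + 1 < j ∧ sv (glue hab hd A B) (i + 1) < sv (glue hab hd A B) j ∧
        sv (glue hab hd A B) j < sv (glue hab hd A B) i then 1 else 0))
      = ∑ i ∈ Ico 1 (b + 1), ∑ j ∈ Ico 1 (b + 1),
          (if i + 1 < j ∧ sv B (i + 1) < sv B j ∧ sv B j < sv B i then 1 else 0) := by
    rw [Finset.sum_Ico_eq_sum_range, show n + 1 - (a + 1) = b + 1 by omega,
      Finset.sum_range_succ']
    have zmid : ∑ j ∈ Ico 1 (n + 1), (if a + 1 + 0 + 1 < j ∧
        sv (glue hab hd A B) (a + 1 + 0 + 1) < sv (glue hab hd A B) j ∧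
        sv (glue hab hd A B) j < sv (glue hab hd A B) (a + 1 + 0) then 1 else 0) = 0 := by
      have e0 : sv (glue hab hd A B) (a + 1 + 0) = 1 := by
        simpa using sv_glue_mid hab hd A B
      apply Finset.sum_eq_zero
      intro j hj
      simp only [Finset.mem_Ico] at hj
      have := sv_pos (σ := glue hab hd A B) (k := j) (by omega) (by omega)
      rw [if_neg (by omega)]
    rw [zmid, Nat.add_zero]
    rw [Finset.sum_Ico_eq_sum_range (f := fun i => ∑ j ∈ Ico 1 (b + 1),
        (if i + 1 < j ∧ sv B (i + 1) < sv B j ∧ sv B j < sv B i then 1 else 0)),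
      show b + 1 - 1 = b by norm_num]
    apply Finset.sum_congr rfl
    intro k hk
    simp only [Finset.mem_range] at hk
    rw [show (1 : ℕ) + k = k + 1 by omega]
    -- inner sums
    rw [← Finset.sum_Ico_consecutive
      (f := fun j => (if a + 1 + (k + 1) + 1 < j ∧
        sv (glue hab hd A B) (a + 1 + (k + 1) + 1) < sv (glue hab hd A B) j ∧
        sv (glue hab hd A B) j < sv (glue hab hd A B) (a + 1 + (k + 1)) then 1 else 0))
      (by omega : 1 ≤ a + 1) (by omega : a + 1 ≤ n + 1)]
    have z1 : ∑ j ∈ Ico 1 (a + 1), (if a + 1 + (k + 1) + 1 < j ∧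
        sv (glue hab hd A B) (a + 1 + (k + 1) + 1) < sv (glue hab hd A B) j ∧
        sv (glue hab hd A B) j < sv (glue hab hd A B) (a + 1 + (k + 1)) then 1 else 0) = 0 := by
      apply Finset.sum_eq_zero
      intro j hj
      simp only [Finset.mem_Ico] at hj
      rw [if_neg (by omega)]
    rw [z1, Nat.zero_add, Finset.sum_Ico_eq_sum_range,
      show n + 1 - (a + 1) = b + 1 by omega, Finset.sum_range_succ']
    have zmid2 : (if a + 1 + (k + 1) + 1 < a + 1 + 0 ∧
        sv (glue hab hd A B) (a + 1 + (k + 1) + 1) < sv (glue hab hd A B) (a + 1 + 0) ∧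
        sv (glue hab hd A B) (a + 1 + 0) < sv (glue hab hd A B) (a + 1 + (k + 1)) then 1 else 0) = 0 := by
      rw [if_neg (by omega)]
    rw [zmid2, Nat.add_zero]
    rw [Finset.sum_Ico_eq_sum_range (f := fun j =>
      (if k + 1 + 1 < j ∧ sv B (k + 1 + 1) < sv B j ∧ sv B j < sv B (k + 1) then 1 else 0)),
      show b + 1 - 1 = b by norm_num]
    apply Finset.sum_congr rfl
    intro l hl
    simp only [Finset.mem_range] at hl
    have g1 : sv (glue hab hd A B) (a + 1 + (k + 1)) = sv B (k + 1) + 1 :=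
      sv_glue_B hab hd A B (by omega) (by omega)
    have g2 : sv (glue hab hd A B) (a + 1 + (l + 1)) = sv B (l + 1) + 1 :=
      sv_glue_B hab hd A B (by omega) (by omega)
    have g3 : (k + 1 < b ∧ sv (glue hab hd A B) (a + 1 + (k + 1) + 1) = sv B (k + 1 + 1) + 1) ∨
        (k + 1 = b) := by
      rcases Nat.lt_or_ge (k + 1) b with h | h
      · refine Or.inl ⟨h, ?_⟩
        rw [show a + 1 + (k + 1) + 1 = a + 1 + (k + 1 + 1) by omega]
        exact sv_glue_B hab hd A B (by omega) (by omega)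
      · exact Or.inr (by omega)
    rw [show (1 : ℕ) + l = l + 1 by omega]
    exact if_congr (by omega) rfl rfl
  rw [tail]
  ring

end Dev6
section Dev7
open Equiv Finset

variable {a b n : ℕ}

lemma glue_val_lt (hab : a + 1 + b = n) {cA cB : ℕ} (hd : GoodShift a b cA cB)
    (A : Equiv.Perm (Fin a)) (B : Equiv.Perm (Fin b)) {i : Fin n} (h : (i : ℕ) < a) :
    (glue hab hd A B i : ℕ) = A ⟨i, h⟩ + cA := by
  rw [glue_apply]; unfold glueVal; rw [dif_pos h]

lemma glue_val_mid (hab : a + 1 + b = n) {cA cB : ℕ} (hd : GoodShift a b cA cB)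
    (A : Equiv.Perm (Fin a)) (B : Equiv.Perm (Fin b)) {i : Fin n} (h : (i : ℕ) = a) :
    (glue hab hd A B i : ℕ) = 0 := by
  rw [glue_apply]; unfold glueVal; rw [dif_neg (by omega), if_pos h]

lemma glue_val_gt (hab : a + 1 + b = n) {cA cB : ℕ} (hd : GoodShift a b cA cB)
    (A : Equiv.Perm (Fin a)) (B : Equiv.Perm (Fin b)) {i : Fin n} (h : a < (i : ℕ)) :
    (glue hab hd A B i : ℕ) = B ⟨(i : ℕ) - (a + 1), by have := i.isLt; omega⟩ + cB := by
  rw [glue_apply]; unfold glueVal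
  rw [dif_neg (by omega), if_neg (by omega), dif_pos (by have := i.isLt; omega)]

lemma glue_occA (hab : a + 1 + b = n) {cA cB : ℕ} (hd : GoodShift a b cA cB)
    (A : Equiv.Perm (Fin a)) (B : Equiv.Perm (Fin b)) (i : Fin a) :
    (glue hab hd A B ⟨(i : ℕ), by have := i.isLt; omega⟩ : ℕ) = (A i : ℕ) + cA := by
  rw [glue_val_lt hab hd A B (show ((⟨(i : ℕ), by have := i.isLt; omega⟩ : Fin n) : ℕ) < a
    from i.isLt)]

lemma glue_occB (hab : a + 1 + b = n) {cA cB : ℕ} (hd : GoodShift a b cA cB)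
    (A : Equiv.Perm (Fin a)) (B : Equiv.Perm (Fin b)) (i : Fin b) :
    (glue hab hd A B ⟨a + 1 + (i : ℕ), by have := i.isLt; omega⟩ : ℕ) = (B i : ℕ) + cB := by
  rw [glue_val_gt hab hd A B
    (show a < ((⟨a + 1 + (i : ℕ), by have := i.isLt; omega⟩ : Fin n) : ℕ) by
      show a < a + 1 + (i : ℕ); omega)]
  have key : ∀ (x y : Fin b), (x : ℕ) = (y : ℕ) → (B x : ℕ) + cB = (B y : ℕ) + cB := by
    intro x y h; rw [Fin.ext h]
  apply key
  show a + 1 + (i : ℕ) - (a + 1) = (i : ℕ)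
  omega

lemma avoids312_glue (hab : a + 1 + b = n) {cA cB : ℕ} (hd : GoodShift a b cA cB)
    (hL : cA = 1 ∧ cB = a + 1) (A : Equiv.Perm (Fin a)) (B : Equiv.Perm (Fin b)) :
    Avoids312 (glue hab hd A B) ↔ Avoids312 A ∧ Avoids312 B := by
  obtain ⟨hc1, hc2⟩ := hL
  subst hc1; subst hc2
  constructor
  · intro H
    constructor
    · intro ⟨i, j, k, h1, h2, h3, h4⟩
      apply H
      have e1 : (i : ℕ) < j := h1
      have e2 : (j : ℕ) < k := h2
      have e3 : (A j : ℕ) < A k := h3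
      have e4 : (A k : ℕ) < A i := h4
      have vi := glue_occA hab hd A B i
      have vj := glue_occA hab hd A B j
      have vk := glue_occA hab hd A B k
      exact ⟨⟨(i : ℕ), by have := i.isLt; omega⟩, ⟨(j : ℕ), by have := j.isLt; omega⟩,
        ⟨(k : ℕ), by have := k.isLt; omega⟩, Fin.mk_lt_mk.2 e1, Fin.mk_lt_mk.2 e2,
        show (_ : ℕ) < _ by omega, show (_ : ℕ) < _ by omega⟩
    · intro ⟨i, j, k, h1, h2, h3, h4⟩
      apply H
      have e1 : (i : ℕ) < j := h1
      have e2 : (j : ℕ) < k := h2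
      have e3 : (B j : ℕ) < B k := h3
      have e4 : (B k : ℕ) < B i := h4
      have vi := glue_occB hab hd A B i
      have vj := glue_occB hab hd A B j
      have vk := glue_occB hab hd A B k
      exact ⟨⟨a + 1 + (i : ℕ), by have := i.isLt; omega⟩,
        ⟨a + 1 + (j : ℕ), by have := j.isLt; omega⟩,
        ⟨a + 1 + (k : ℕ), by have := k.isLt; omega⟩, Fin.mk_lt_mk.2 (by omega),
        Fin.mk_lt_mk.2 (by omega), show (_ : ℕ) < _ by omega, show (_ : ℕ) < _ by omega⟩
  · intro ⟨HA, HB⟩ ⟨i, j, k, h1, h2, h3, h4⟩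
    have e1 : (i : ℕ) < j := h1
    have e2 : (j : ℕ) < k := h2
    have e3 : (glue hab hd A B j : ℕ) < glue hab hd A B k := h3
    have e4 : (glue hab hd A B k : ℕ) < glue hab hd A B i := h4
    have hi := i.isLt; have hj := j.isLt; have hk := k.isLt
    rcases Nat.lt_trichotomy (i : ℕ) a with hia | hia | hia
    · have vi : (glue hab hd A B i : ℕ) = A ⟨i, hia⟩ + 1 := glue_val_lt hab hd A B hia
      have vAi := (A ⟨i, hia⟩).isLt
      have hka : (k : ℕ) < a := by
        by_contra hka
        rcases Nat.eq_or_lt_of_le (Nat.le_of_not_lt hka) with h | h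
        · have := glue_val_mid hab hd A B h.symm
          omega
        · have vk : (glue hab hd A B k : ℕ) = B ⟨(k : ℕ) - (a + 1), by omega⟩ + (a + 1) :=
            glue_val_gt hab hd A B (by omega)
          omega
      have hja : (j : ℕ) < a := by omega
      have vj : (glue hab hd A B j : ℕ) = A ⟨j, hja⟩ + 1 := glue_val_lt hab hd A B hja
      have vk : (glue hab hd A B k : ℕ) = A ⟨k, hka⟩ + 1 := glue_val_lt hab hd A B hka
      exact HA ⟨⟨i, hia⟩, ⟨j, hja⟩, ⟨k, hka⟩, Fin.mk_lt_mk.2 e1, Fin.mk_lt_mk.2 e2,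
        show (_ : ℕ) < _ by omega, show (_ : ℕ) < _ by omega⟩
    · have vi : (glue hab hd A B i : ℕ) = 0 := glue_val_mid hab hd A B hia
      omega
    · have hjb : a < (j : ℕ) := by omega
      have hkb : a < (k : ℕ) := by omega
      have vi : (glue hab hd A B i : ℕ) = B ⟨(i : ℕ) - (a + 1), by omega⟩ + (a + 1) :=
        glue_val_gt hab hd A B hia
      have vj : (glue hab hd A B j : ℕ) = B ⟨(j : ℕ) - (a + 1), by omega⟩ + (a + 1) :=
        glue_val_gt hab hd A B hjb
      have vk : (glue hab hd A B k : ℕ) = B ⟨(k : ℕ) - (a + 1), by omega⟩ + (a + 1) :=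
        glue_val_gt hab hd A B hkb
      exact HB ⟨⟨(i : ℕ) - (a + 1), by omega⟩, ⟨(j : ℕ) - (a + 1), by omega⟩,
        ⟨(k : ℕ) - (a + 1), by omega⟩, Fin.mk_lt_mk.2 (by omega), Fin.mk_lt_mk.2 (by omega),
        show (_ : ℕ) < _ by omega, show (_ : ℕ) < _ by omega⟩

lemma avoids213_glue (hab : a + 1 + b = n) {cA cB : ℕ} (hd : GoodShift a b cA cB)
    (hH : cA = b + 1 ∧ cB = 1) (A : Equiv.Perm (Fin a)) (B : Equiv.Perm (Fin b)) :
    Avoids213 (glue hab hd A B) ↔ Avoids213 A ∧ Avoids213 B := by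
  obtain ⟨hc1, hc2⟩ := hH
  subst hc1; subst hc2
  constructor
  · intro H
    constructor
    · intro ⟨i, j, k, h1, h2, h3, h4⟩
      apply H
      have e1 : (i : ℕ) < j := h1
      have e2 : (j : ℕ) < k := h2
      have e3 : (A j : ℕ) < A i := h3
      have e4 : (A i : ℕ) < A k := h4
      have vi := glue_occA hab hd A B i
      have vj := glue_occA hab hd A B j
      have vk := glue_occA hab hd A B k
      exact ⟨⟨(i : ℕ), by have := i.isLt; omega⟩, ⟨(j : ℕ), by have := j.isLt; omega⟩,
        ⟨(k : ℕ), by have := k.isLt; omega⟩, Fin.mk_lt_mk.2 e1, Fin.mk_lt_mk.2 e2,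
        show (_ : ℕ) < _ by omega, show (_ : ℕ) < _ by omega⟩
    · intro ⟨i, j, k, h1, h2, h3, h4⟩
      apply H
      have e1 : (i : ℕ) < j := h1
      have e2 : (j : ℕ) < k := h2
      have e3 : (B j : ℕ) < B i := h3
      have e4 : (B i : ℕ) < B k := h4
      have vi := glue_occB hab hd A B i
      have vj := glue_occB hab hd A B j
      have vk := glue_occB hab hd A B k
      exact ⟨⟨a + 1 + (i : ℕ), by have := i.isLt; omega⟩,
        ⟨a + 1 + (j : ℕ), by have := j.isLt; omega⟩,
        ⟨a + 1 + (k : ℕ), by have := k.isLt; omega⟩, Fin.mk_lt_mk.2 (by omega),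
        Fin.mk_lt_mk.2 (by omega), show (_ : ℕ) < _ by omega, show (_ : ℕ) < _ by omega⟩
  · intro ⟨HA, HB⟩ ⟨i, j, k, h1, h2, h3, h4⟩
    have e1 : (i : ℕ) < j := h1
    have e2 : (j : ℕ) < k := h2
    have e3 : (glue hab hd A B j : ℕ) < glue hab hd A B i := h3
    have e4 : (glue hab hd A B i : ℕ) < glue hab hd A B k := h4
    have hi := i.isLt; have hj := j.isLt; have hk := k.isLt
    rcases Nat.lt_trichotomy (i : ℕ) a with hia | hia | hia
    · have vi : (glue hab hd A B i : ℕ) = A ⟨i, hia⟩ + (b + 1) := glue_val_lt hab hd A B hia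
      have hka : (k : ℕ) < a := by
        by_contra hka
        rcases Nat.eq_or_lt_of_le (Nat.le_of_not_lt hka) with h | h
        · have := glue_val_mid hab hd A B h.symm
          omega
        · have vk : (glue hab hd A B k : ℕ) = B ⟨(k : ℕ) - (a + 1), by omega⟩ + 1 :=
            glue_val_gt hab hd A B (by omega)
          have := (B ⟨(k : ℕ) - (a + 1), by omega⟩).isLt
          omega
      have hja : (j : ℕ) < a := by omega
      have vj : (glue hab hd A B j : ℕ) = A ⟨j, hja⟩ + (b + 1) := glue_val_lt hab hd A B hja
      have vk : (glue hab hd A B k : ℕ) = A ⟨k, hka⟩ + (b + 1) := glue_val_lt hab hd A B hka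
      exact HA ⟨⟨i, hia⟩, ⟨j, hja⟩, ⟨k, hka⟩, Fin.mk_lt_mk.2 e1, Fin.mk_lt_mk.2 e2,
        show (_ : ℕ) < _ by omega, show (_ : ℕ) < _ by omega⟩
    · have vi : (glue hab hd A B i : ℕ) = 0 := glue_val_mid hab hd A B hia
      omega
    · have hjb : a < (j : ℕ) := by omega
      have hkb : a < (k : ℕ) := by omega
      have vi : (glue hab hd A B i : ℕ) = B ⟨(i : ℕ) - (a + 1), by omega⟩ + 1 :=
        glue_val_gt hab hd A B hia
      have vj : (glue hab hd A B j : ℕ) = B ⟨(j : ℕ) - (a + 1), by omega⟩ + 1 :=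
        glue_val_gt hab hd A B hjb
      have vk : (glue hab hd A B k : ℕ) = B ⟨(k : ℕ) - (a + 1), by omega⟩ + 1 :=
        glue_val_gt hab hd A B hkb
      exact HB ⟨⟨(i : ℕ) - (a + 1), by omega⟩, ⟨(j : ℕ) - (a + 1), by omega⟩,
        ⟨(k : ℕ) - (a + 1), by omega⟩, Fin.mk_lt_mk.2 (by omega), Fin.mk_lt_mk.2 (by omega),
        show (_ : ℕ) < _ by omega, show (_ : ℕ) < _ by omega⟩

end Dev7
section Dev8
open Equiv Finset

variable {n : ℕ}

lemma val_zero_eq {σ : Equiv.Perm (Fin n)} {p x : Fin n} (hp : (σ p : ℕ) = 0)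
    (hx : (σ x : ℕ) = 0) : x = p :=
  σ.injective (Fin.ext (by omega))

lemma avoids312_cross {σ : Equiv.Perm (Fin n)} {p : Fin n} (hp : (σ p : ℕ) = 0)
    (H : Avoids312 σ) : ∀ i k : Fin n, i < p → p < k → (σ i : ℕ) < σ k := by
  intro i k h1 h2
  by_contra hc
  have hne : (σ k : ℕ) ≠ σ i := fun h => by
    have := σ.injective (Fin.ext h); subst this; exact absurd h1 (by
      intro hh; exact absurd (lt_trans hh h2) (lt_irrefl _))
  have hk0 : (σ k : ℕ) ≠ 0 := fun h => by
    have := val_zero_eq hp h; subst this; exact lt_irrefl _ h2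
  exact H ⟨i, p, k, h1, h2, show (σ p : ℕ) < σ k by omega, show (σ k : ℕ) < σ i by omega⟩

lemma avoids213_cross {σ : Equiv.Perm (Fin n)} {p : Fin n} (hp : (σ p : ℕ) = 0)
    (H : Avoids213 σ) : ∀ i k : Fin n, i < p → p < k → (σ k : ℕ) < σ i := by
  intro i k h1 h2
  by_contra hc
  have hne : (σ k : ℕ) ≠ σ i := fun h => by
    have := σ.injective (Fin.ext h); subst this; exact absurd h1 (by
      intro hh; exact absurd (lt_trans hh h2) (lt_irrefl _))
  have hi0 : (σ i : ℕ) ≠ 0 := fun h => by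
    have := val_zero_eq hp h; subst this; exact lt_irrefl _ h1
  exact H ⟨i, p, k, h1, h2, show (σ p : ℕ) < σ i by omega, show (σ i : ℕ) < σ k by omega⟩

lemma avoids312_prefix {σ : Equiv.Perm (Fin n)} {p : Fin n} (hp : (σ p : ℕ) = 0)
    (H : Avoids312 σ) : ∀ i : Fin n, i < p → (σ i : ℕ) ≤ p := by
  intro i hi
  have hcount := Finset.card_le_card_of_injOn (fun v => σ⁻¹ v)
    (s := Iic (σ i)) (t := Iic p) ?_ (fun x _ y _ h => σ⁻¹.injective h)
  · rw [Fin.card_Iic, Fin.card_Iic] at hcount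
    omega
  · intro v hv
    simp only [Finset.coe_Iic, Set.mem_Iic] at hv ⊢
    by_contra hgt
    have hgt' : p < σ⁻¹ v := lt_of_not_ge hgt
    have := avoids312_cross hp H i (σ⁻¹ v) hi hgt'
    rw [← Equiv.Perm.mul_apply, mul_inv_cancel, Equiv.Perm.one_apply] at this
    have hv' : (v : ℕ) ≤ (σ i : ℕ) := hv
    have : (σ i : ℕ) < v := this
    omega

lemma avoids312_suffix {σ : Equiv.Perm (Fin n)} {p : Fin n} (hp : (σ p : ℕ) = 0)
    (H : Avoids312 σ) : ∀ k : Fin n, p < k → (p : ℕ) < σ k := by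
  intro k hk
  have hk0 : (σ k : ℕ) ≠ 0 := fun h => by
    have := val_zero_eq hp h; subst this; exact lt_irrefl _ hk
  have hcount := Finset.card_le_card_of_injOn (fun v => σ⁻¹ v)
    (s := Ici (σ k)) (t := Ioi p) ?_ (fun x _ y _ h => σ⁻¹.injective h)
  · rw [Fin.card_Ici, Fin.card_Ioi] at hcount
    have h1 := (σ k).isLt
    have h2 := p.isLt
    omega
  · intro v hv
    simp only [Finset.coe_Ici, Finset.coe_Ioi, Set.mem_Ici, Set.mem_Ioi] at hv ⊢
    have hv' : (σ k : ℕ) ≤ v := hv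
    have hvne : (v : ℕ) ≠ 0 := by omega
    have hnep : σ⁻¹ v ≠ p := fun h => by
      apply hvne
      have : σ (σ⁻¹ v) = v := Equiv.apply_symm_apply σ v
      rw [h] at this
      omega
    rcases lt_trichotomy (σ⁻¹ v) p with h | h | h
    · exfalso
      have := avoids312_cross hp H (σ⁻¹ v) k h hk
      rw [← Equiv.Perm.mul_apply, mul_inv_cancel, Equiv.Perm.one_apply] at this
      omega
    · exact absurd h hnep
    · exact h

lemma avoids213_prefix {σ : Equiv.Perm (Fin n)} {p : Fin n} (hp : (σ p : ℕ) = 0)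
    (H : Avoids213 σ) : ∀ i : Fin n, i < p → n - (p : ℕ) ≤ σ i := by
  intro i hi
  have hi0 : (σ i : ℕ) ≠ 0 := fun h => by
    have := val_zero_eq hp h; subst this; exact lt_irrefl _ hi
  have hcount := Finset.card_le_card_of_injOn (fun v => σ⁻¹ v)
    (s := Ici (σ i)) (t := Iio p) ?_ (fun x _ y _ h => σ⁻¹.injective h)
  · rw [Fin.card_Ici, Fin.card_Iio] at hcount
    have h1 := (σ i).isLt
    omega
  · intro v hv
    simp only [Finset.coe_Ici, Finset.coe_Iio, Set.mem_Ici, Set.mem_Iio] at hv ⊢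
    have hv' : (σ i : ℕ) ≤ v := hv
    have hvne : (v : ℕ) ≠ 0 := by omega
    have hnep : σ⁻¹ v ≠ p := fun h => by
      apply hvne
      have : σ (σ⁻¹ v) = v := Equiv.apply_symm_apply σ v
      rw [h] at this
      omega
    rcases lt_trichotomy (σ⁻¹ v) p with h | h | h
    · exact h
    · exact absurd h hnep
    · exfalso
      have := avoids213_cross hp H i (σ⁻¹ v) hi h
      rw [← Equiv.Perm.mul_apply, mul_inv_cancel, Equiv.Perm.one_apply] at this
      omega

lemma avoids213_suffix {σ : Equiv.Perm (Fin n)} {p : Fin n} (hp : (σ p : ℕ) = 0)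
    (H : Avoids213 σ) : ∀ k : Fin n, p < k → (σ k : ℕ) < n - (p : ℕ) := by
  intro k hk
  have hcount := Finset.card_le_card_of_injOn (fun v => σ⁻¹ v)
    (s := Iic (σ k)) (t := Ici p) ?_ (fun x _ y _ h => σ⁻¹.injective h)
  · rw [Fin.card_Iic, Fin.card_Ici] at hcount
    have h2 := p.isLt
    omega
  · intro v hv
    simp only [Finset.coe_Iic, Finset.coe_Ici, Set.mem_Iic, Set.mem_Ici] at hv ⊢
    have hv' : (v : ℕ) ≤ σ k := hv
    by_contra hlt
    have hlt' : σ⁻¹ v < p := lt_of_not_ge hlt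
    have := avoids213_cross hp H (σ⁻¹ v) k hlt' hk
    rw [← Equiv.Perm.mul_apply, mul_inv_cancel, Equiv.Perm.one_apply] at this
    omega

end Dev8
section Dev9
open Equiv Finset

variable {n : ℕ}

/-- extract the prefix pattern of `σ` (positions `0..p-1`), subtracting shift `c` -/
def extractA (σ : Equiv.Perm (Fin n)) (p c : ℕ) (hp : p ≤ n)
    (hlo : ∀ i : Fin n, (i : ℕ) < p → c ≤ (σ i : ℕ) ∧ (σ i : ℕ) < c + p) :
    Equiv.Perm (Fin p) :=
  Equiv.ofBijective (fun i => ⟨(σ ⟨(i : ℕ), by have := i.isLt; omega⟩ : ℕ) - c, by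
    have h := hlo ⟨(i : ℕ), by have := i.isLt; omega⟩ i.isLt
    omega⟩)
  ((Finite.injective_iff_bijective).1 (by
    intro i j hij
    have hval := congrArg Fin.val hij
    simp only [] at hval
    have g1 := hlo ⟨(i : ℕ), by have := i.isLt; omega⟩ i.isLt
    have g2 := hlo ⟨(j : ℕ), by have := j.isLt; omega⟩ j.isLt
    have hσ : (σ ⟨(i : ℕ), by have := i.isLt; omega⟩ : ℕ)
        = (σ ⟨(j : ℕ), by have := j.isLt; omega⟩ : ℕ) := by omega
    have := congrArg Fin.val (σ.injective (Fin.ext hσ))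
    simp only [] at this
    exact Fin.ext this))

lemma extractA_apply (σ : Equiv.Perm (Fin n)) (p c : ℕ) (hp : p ≤ n)
    (hlo : ∀ i : Fin n, (i : ℕ) < p → c ≤ (σ i : ℕ) ∧ (σ i : ℕ) < c + p) (i : Fin p) :
    (extractA σ p c hp hlo i : ℕ) = (σ ⟨(i : ℕ), by have := i.isLt; omega⟩ : ℕ) - c := rfl

/-- extract the suffix pattern of `σ` (positions `p+1..n-1`), subtracting shift `c` -/
def extractB (σ : Equiv.Perm (Fin n)) (p c : ℕ) (hp : p < n)
    (hlo : ∀ i : Fin n, p < (i : ℕ) → c ≤ (σ i : ℕ) ∧ (σ i : ℕ) < c + (n - 1 - p)) :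
    Equiv.Perm (Fin (n - 1 - p)) :=
  Equiv.ofBijective (fun j => ⟨(σ ⟨p + 1 + (j : ℕ), by have := j.isLt; omega⟩ : ℕ) - c, by
    have h := hlo ⟨p + 1 + (j : ℕ), by have := j.isLt; omega⟩ (by show p < p + 1 + (j : ℕ); omega)
    omega⟩)
  ((Finite.injective_iff_bijective).1 (by
    intro i j hij
    have hval := congrArg Fin.val hij
    simp only [] at hval
    have g1 := hlo ⟨p + 1 + (i : ℕ), by have := i.isLt; omega⟩ (by show p < p + 1 + (i : ℕ); omega)
    have g2 := hlo ⟨p + 1 + (j : ℕ), by have := j.isLt; omega⟩ (by show p < p + 1 + (j : ℕ); omega)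
    have hσ : (σ ⟨p + 1 + (i : ℕ), by have := i.isLt; omega⟩ : ℕ)
        = (σ ⟨p + 1 + (j : ℕ), by have := j.isLt; omega⟩ : ℕ) := by omega
    have := congrArg Fin.val (σ.injective (Fin.ext hσ))
    simp only [] at this
    exact Fin.ext (by omega)))

lemma extractB_apply (σ : Equiv.Perm (Fin n)) (p c : ℕ) (hp : p < n)
    (hlo : ∀ i : Fin n, p < (i : ℕ) → c ≤ (σ i : ℕ) ∧ (σ i : ℕ) < c + (n - 1 - p))
    (j : Fin (n - 1 - p)) :
    (extractB σ p c hp hlo j : ℕ)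
      = (σ ⟨p + 1 + (j : ℕ), by have := j.isLt; omega⟩ : ℕ) - c := rfl

lemma glue_extract_eq (σ : Equiv.Perm (Fin n)) (p cA cB : ℕ) (hpn : p < n)
    (hd : GoodShift p (n - 1 - p) cA cB)
    (hp0 : (σ ⟨p, hpn⟩ : ℕ) = 0)
    (hloA : ∀ i : Fin n, (i : ℕ) < p → cA ≤ (σ i : ℕ) ∧ (σ i : ℕ) < cA + p)
    (hloB : ∀ i : Fin n, p < (i : ℕ) → cB ≤ (σ i : ℕ) ∧ (σ i : ℕ) < cB + (n - 1 - p)) :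
    glue (by omega) hd (extractA σ p cA (by omega) hloA) (extractB σ p cB hpn hloB) = σ := by
  apply Equiv.ext
  intro x
  apply Fin.ext
  rcases Nat.lt_trichotomy (x : ℕ) p with hx | hx | hx
  · rw [glue_val_lt _ _ _ _ hx, extractA_apply]
    have hxx : (⟨(x : ℕ), by have := x.isLt; omega⟩ : Fin n) = x := Fin.ext rfl
    rw [hxx]
    have h1 := hloA x hx
    omega
  · rw [glue_val_mid _ _ _ _ hx]
    have : x = ⟨p, hpn⟩ := Fin.ext hx
    rw [this, hp0]
  · rw [glue_val_gt _ _ _ _ hx, extractB_apply]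
    have hxx : (⟨p + 1 + ((x : ℕ) - (p + 1)), by have := x.isLt; omega⟩ : Fin n) = x :=
      Fin.ext (by show p + 1 + ((x : ℕ) - (p + 1)) = (x : ℕ); omega)
    rw [hxx]
    have h1 := hloB x hx
    omega

lemma exists_glue312 (hn : 1 ≤ n) (σ : Equiv.Perm (Fin n)) (H : Avoids312 σ) :
    ∃ (p : ℕ) (hp : p < n) (A : Equiv.Perm (Fin p)) (B : Equiv.Perm (Fin (n - 1 - p))),
      glue (by omega) (Or.inl ⟨rfl, rfl⟩ : GoodShift p (n - 1 - p) 1 (p + 1)) A B = σ := by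
  set P : Fin n := σ⁻¹ ⟨0, by omega⟩ with hP
  have hp0 : (σ P : ℕ) = 0 := by rw [hP, ← Equiv.Perm.mul_apply, mul_inv_cancel, Equiv.Perm.one_apply]
  have hloA : ∀ i : Fin n, (i : ℕ) < (P : ℕ) → 1 ≤ (σ i : ℕ) ∧ (σ i : ℕ) < 1 + (P : ℕ) := by
    intro i hi
    have h1 := avoids312_prefix hp0 H i hi
    have h2 : (σ i : ℕ) ≠ 0 := fun h => by
      have := val_zero_eq hp0 h; subst this; exact absurd hi (lt_irrefl _)
    omega
  have hloB : ∀ i : Fin n, (P : ℕ) < (i : ℕ) →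
      (P : ℕ) + 1 ≤ (σ i : ℕ) ∧ (σ i : ℕ) < (P : ℕ) + 1 + (n - 1 - (P : ℕ)) := by
    intro i hi
    have h1 := avoids312_suffix hp0 H i hi
    have h2 := (σ i).isLt
    have h3 := P.isLt
    omega
  exact ⟨(P : ℕ), P.isLt, extractA σ P 1 (by omega) hloA,
    extractB σ P ((P : ℕ) + 1) P.isLt hloB,
    glue_extract_eq σ P 1 ((P : ℕ) + 1) P.isLt _ (by simpa using hp0) hloA hloB⟩

lemma exists_glue213 (hn : 1 ≤ n) (σ : Equiv.Perm (Fin n)) (H : Avoids213 σ) :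
    ∃ (p : ℕ) (hp : p < n) (A : Equiv.Perm (Fin p)) (B : Equiv.Perm (Fin (n - 1 - p))),
      glue (by omega) (Or.inr ⟨rfl, rfl⟩ : GoodShift p (n - 1 - p) (n - 1 - p + 1) 1) A B = σ := by
  set P : Fin n := σ⁻¹ ⟨0, by omega⟩ with hP
  have hp0 : (σ P : ℕ) = 0 := by rw [hP, ← Equiv.Perm.mul_apply, mul_inv_cancel, Equiv.Perm.one_apply]
  have hPn := P.isLt
  have hloA : ∀ i : Fin n, (i : ℕ) < (P : ℕ) →
      n - 1 - (P : ℕ) + 1 ≤ (σ i : ℕ) ∧ (σ i : ℕ) < n - 1 - (P : ℕ) + 1 + (P : ℕ) := by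
    intro i hi
    have h1 := avoids213_prefix hp0 H i hi
    have h2 := (σ i).isLt
    omega
  have hloB : ∀ i : Fin n, (P : ℕ) < (i : ℕ) →
      1 ≤ (σ i : ℕ) ∧ (σ i : ℕ) < 1 + (n - 1 - (P : ℕ)) := by
    intro i hi
    have h1 := avoids213_suffix hp0 H i hi
    have h2 : (σ i : ℕ) ≠ 0 := fun h => by
      have := val_zero_eq hp0 h; subst this; exact absurd hi (lt_irrefl _)
    omega
  exact ⟨(P : ℕ), P.isLt, extractA σ P (n - 1 - (P : ℕ) + 1) (by omega) hloA,
    extractB σ P 1 P.isLt hloB,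
    glue_extract_eq σ P (n - 1 - (P : ℕ) + 1) 1 P.isLt _ (by simpa using hp0) hloA hloB⟩

end Dev9
section Dev10
open Equiv Finset

variable {n : ℕ}

lemma glue_size_eq {a b a' b' cA cB cA' cB' : ℕ} (hab : a + 1 + b = n) (hab' : a' + 1 + b' = n)
    (hd : GoodShift a b cA cB) (hd' : GoodShift a' b' cA' cB')
    (A : Equiv.Perm (Fin a)) (B : Equiv.Perm (Fin b))
    (A' : Equiv.Perm (Fin a')) (B' : Equiv.Perm (Fin b'))
    (h : glue hab hd A B = glue hab' hd' A' B') : a = a' := by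
  have hcA' : 1 ≤ cA' := by rcases hd' with ⟨h1, _⟩ | ⟨h1, _⟩ <;> omega
  have hcB' : 1 ≤ cB' := by rcases hd' with ⟨_, h2⟩ | ⟨_, h2⟩ <;> omega
  have h0 : (glue hab hd A B ⟨a, by omega⟩ : ℕ) = 0 := glue_val_mid _ _ _ _ rfl
  have hval : (glue hab' hd' A' B' ⟨a, by omega⟩ : ℕ) = 0 := by rw [← h]; exact h0
  rcases Nat.lt_trichotomy a a' with hc | hc | hc
  · rw [glue_val_lt hab' hd' A' B' hc] at hval; omega
  · exact hc
  · rw [glue_val_gt hab' hd' A' B' hc] at hval; omega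

lemma glue_inj_parts {a b cA cB : ℕ} (hab : a + 1 + b = n)
    (hd hd' : GoodShift a b cA cB)
    (A A' : Equiv.Perm (Fin a)) (B B' : Equiv.Perm (Fin b))
    (h : glue hab hd A B = glue hab hd' A' B') : A = A' ∧ B = B' := by
  constructor
  · apply Equiv.ext
    intro i
    apply Fin.ext
    have e1 : (glue hab hd A B ⟨(i : ℕ), by have := i.isLt; omega⟩ : ℕ) = (A i : ℕ) + cA :=
      glue_occA hab hd A B i
    have e2 : (glue hab hd' A' B' ⟨(i : ℕ), by have := i.isLt; omega⟩ : ℕ) = (A' i : ℕ) + cA :=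
      glue_occA hab hd' A' B' i
    rw [h] at e1
    omega
  · apply Equiv.ext
    intro i
    apply Fin.ext
    have e1 : (glue hab hd A B ⟨a + 1 + (i : ℕ), by have := i.isLt; omega⟩ : ℕ) = (B i : ℕ) + cB :=
      glue_occB hab hd A B i
    have e2 : (glue hab hd' A' B' ⟨a + 1 + (i : ℕ), by have := i.isLt; omega⟩ : ℕ) = (B' i : ℕ) + cB :=
      glue_occB hab hd' A' B' i
    rw [h] at e1
    omega

/-- packaged gluing map for the Low (312) configuration -/
def glueS312 (x : (p : ℕ) × (Equiv.Perm (Fin p) × Equiv.Perm (Fin (n - 1 - p))))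
    (hx : x.1 < n) : Equiv.Perm (Fin n) :=
  glue (by omega) (show GoodShift x.1 (n - 1 - x.1) 1 (x.1 + 1) from Or.inl ⟨rfl, rfl⟩) x.2.1 x.2.2

/-- packaged gluing map for the High (213) configuration -/
def glueS213 (x : (p : ℕ) × (Equiv.Perm (Fin p) × Equiv.Perm (Fin (n - 1 - p))))
    (hx : x.1 < n) : Equiv.Perm (Fin n) :=
  glue (by omega) (show GoodShift x.1 (n - 1 - x.1) (n - 1 - x.1 + 1) 1 from Or.inr ⟨rfl, rfl⟩)
    x.2.1 x.2.2

lemma sum312_decomp (hn : 1 ≤ n) (f : ℕ → ℕ → ℕ → ℝ) :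
    ∑ x ∈ (range n).sigma (fun p =>
        (univ.filter (fun A : Equiv.Perm (Fin p) => Avoids312 A)) ×ˢ
        (univ.filter (fun B : Equiv.Perm (Fin (n - 1 - p)) => Avoids312 B))),
      f (p2_13 x.2.1 + p2_13 x.2.2 + (if n - 1 - x.1 = 0 then 0 else x.1))
        (vall x.2.1 + vall x.2.2 + (if x.1 ≠ 0 ∧ n - 1 - x.1 ≠ 0 then 1 else 0))
        (des x.2.1 + des x.2.2 + (if x.1 = 0 then 0 else 1))
    = ∑ σ ∈ univ.filter (fun σ : Equiv.Perm (Fin n) => Avoids312 σ),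
        f (p2_13 σ) (vall σ) (des σ) := by
  refine Finset.sum_bij
    (i := fun x hx => glueS312 x (by
      have := (Finset.mem_sigma.1 hx).1; rw [Finset.mem_range] at this; exact this))
    ?_ ?_ ?_ ?_
  · intro x hx
    obtain ⟨hA, hB⟩ := Finset.mem_product.1 (Finset.mem_sigma.1 hx).2
    rw [Finset.mem_filter] at hA hB ⊢
    exact ⟨Finset.mem_univ _, (avoids312_glue _ _ ⟨rfl, rfl⟩ _ _).2 ⟨hA.2, hB.2⟩⟩
  · intro x hx y hy heq
    obtain ⟨p, A, B⟩ := x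
    obtain ⟨p', A', B'⟩ := y
    have hps : p = p' := glue_size_eq _ _ _ _ _ _ _ _ heq
    subst hps
    obtain ⟨hA, hB⟩ := glue_inj_parts _ _ _ _ _ _ _ heq
    subst hA; subst hB
    rfl
  · intro σ hσ
    rw [Finset.mem_filter] at hσ
    obtain ⟨p, hp, A, B, hglue⟩ := exists_glue312 hn σ hσ.2
    have hAB := (avoids312_glue (show p + 1 + (n - 1 - p) = n by omega) _ ⟨rfl, rfl⟩ A B).1
      (by rw [← hglue] at hσ; exact hσ.2)
    refine ⟨⟨p, A, B⟩, ?_, hglue⟩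
    rw [Finset.mem_sigma, Finset.mem_range, Finset.mem_product, Finset.mem_filter,
      Finset.mem_filter]
    exact ⟨hp, ⟨Finset.mem_univ _, hAB.1⟩, ⟨Finset.mem_univ _, hAB.2⟩⟩
  · intro x hx
    rw [show p2_13 (glueS312 x _) = p2_13 x.2.1 + p2_13 x.2.2 + (if n - 1 - x.1 = 0 then 0 else x.1)
      from p2_13_glue _ _ ⟨rfl, rfl⟩ _ _]
    rw [show vall (glueS312 x _) = vall x.2.1 + vall x.2.2 +
        (if x.1 ≠ 0 ∧ n - 1 - x.1 ≠ 0 then 1 else 0) from vall_glue _ _ _ _]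
    rw [show des (glueS312 x _) = des x.2.1 + des x.2.2 + (if x.1 = 0 then 0 else 1)
      from des_glue _ _ _ _]

lemma sum213_decomp (hn : 1 ≤ n) (f : ℕ → ℕ → ℕ → ℝ) :
    ∑ x ∈ (range n).sigma (fun p =>
        (univ.filter (fun A : Equiv.Perm (Fin p) => Avoids213 A)) ×ˢ
        (univ.filter (fun B : Equiv.Perm (Fin (n - 1 - p)) => Avoids213 B))),
      f (p31_2 x.2.1 + p31_2 x.2.2 + (if x.1 = 0 then 0 else n - 1 - x.1))
        (vall x.2.1 + vall x.2.2 + (if x.1 ≠ 0 ∧ n - 1 - x.1 ≠ 0 then 1 else 0))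
        (des x.2.1 + des x.2.2 + (if x.1 = 0 then 0 else 1))
    = ∑ σ ∈ univ.filter (fun σ : Equiv.Perm (Fin n) => Avoids213 σ),
        f (p31_2 σ) (vall σ) (des σ) := by
  refine Finset.sum_bij
    (i := fun x hx => glueS213 x (by
      have := (Finset.mem_sigma.1 hx).1; rw [Finset.mem_range] at this; exact this))
    ?_ ?_ ?_ ?_
  · intro x hx
    obtain ⟨hA, hB⟩ := Finset.mem_product.1 (Finset.mem_sigma.1 hx).2
    rw [Finset.mem_filter] at hA hB ⊢
    exact ⟨Finset.mem_univ _, (avoids213_glue _ _ ⟨rfl, rfl⟩ _ _).2 ⟨hA.2, hB.2⟩⟩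
  · intro x hx y hy heq
    obtain ⟨p, A, B⟩ := x
    obtain ⟨p', A', B'⟩ := y
    have hps : p = p' := glue_size_eq _ _ _ _ _ _ _ _ heq
    subst hps
    obtain ⟨hA, hB⟩ := glue_inj_parts _ _ _ _ _ _ _ heq
    subst hA; subst hB
    rfl
  · intro σ hσ
    rw [Finset.mem_filter] at hσ
    obtain ⟨p, hp, A, B, hglue⟩ := exists_glue213 hn σ hσ.2
    have hAB := (avoids213_glue (show p + 1 + (n - 1 - p) = n by omega) _ ⟨rfl, rfl⟩ A B).1
      (by rw [← hglue] at hσ; exact hσ.2)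
    refine ⟨⟨p, A, B⟩, ?_, hglue⟩
    rw [Finset.mem_sigma, Finset.mem_range, Finset.mem_product, Finset.mem_filter,
      Finset.mem_filter]
    exact ⟨hp, ⟨Finset.mem_univ _, hAB.1⟩, ⟨Finset.mem_univ _, hAB.2⟩⟩
  · intro x hx
    rw [show p31_2 (glueS213 x _) = p31_2 x.2.1 + p31_2 x.2.2 + (if x.1 = 0 then 0 else n - 1 - x.1)
      from p31_2_glue _ _ ⟨rfl, rfl⟩ _ _]
    rw [show vall (glueS213 x _) = vall x.2.1 + vall x.2.2 +
        (if x.1 ≠ 0 ∧ n - 1 - x.1 ≠ 0 then 1 else 0) from vall_glue _ _ _ _]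
    rw [show des (glueS213 x _) = des x.2.1 + des x.2.2 + (if x.1 = 0 then 0 else 1)
      from des_glue _ _ _ _]

end Dev10
section Dev11
open Equiv Finset

/-- joint generating function over 312-avoiding permutations -/
def S312 (m : ℕ) (q y t : ℝ) : ℝ :=
  ∑ σ ∈ univ.filter (fun σ : Equiv.Perm (Fin m) => Avoids312 σ),
    q ^ p2_13 σ * y ^ vall σ * t ^ des σ

/-- joint generating function over 213-avoiding permutations -/
def S213 (m : ℕ) (q y t : ℝ) : ℝ :=
  ∑ σ ∈ univ.filter (fun σ : Equiv.Perm (Fin m) => Avoids213 σ),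
    q ^ p31_2 σ * y ^ vall σ * t ^ des σ

lemma perm0_stats (σ : Equiv.Perm (Fin 0)) :
    p2_13 σ = 0 ∧ p31_2 σ = 0 ∧ vall σ = 0 ∧ des σ = 0 := by
  refine ⟨?_, ?_, ?_, ?_⟩ <;> simp [p2_13, p31_2, vall, des]

lemma S312_zero (q y t : ℝ) : S312 0 q y t = 1 := by
  rw [S312]
  have hav : ∀ σ : Equiv.Perm (Fin 0), Avoids312 σ := by
    rintro σ ⟨i, -⟩; exact i.elim0
  have h1 : ∀ σ ∈ univ.filter (fun σ : Equiv.Perm (Fin 0) => Avoids312 σ),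
      q ^ p2_13 σ * y ^ vall σ * t ^ des σ = 1 := by
    intro σ _
    obtain ⟨e1, e2, e3, e4⟩ := perm0_stats σ
    rw [e1, e3, e4]; simp
  rw [Finset.sum_congr rfl h1, Finset.sum_const, nsmul_eq_mul, mul_one,
    Finset.filter_true_of_mem (fun x _ => hav x), Finset.card_univ]
  norm_num [Fintype.card_perm]

lemma S213_zero (q y t : ℝ) : S213 0 q y t = 1 := by
  rw [S213]
  have hav : ∀ σ : Equiv.Perm (Fin 0), Avoids213 σ := by
    rintro σ ⟨i, -⟩; exact i.elim0
  have h1 : ∀ σ ∈ univ.filter (fun σ : Equiv.Perm (Fin 0) => Avoids213 σ),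
      q ^ p31_2 σ * y ^ vall σ * t ^ des σ = 1 := by
    intro σ _
    obtain ⟨e1, e2, e3, e4⟩ := perm0_stats σ
    rw [e2, e3, e4]; simp
  rw [Finset.sum_congr rfl h1, Finset.sum_const, nsmul_eq_mul, mul_one,
    Finset.filter_true_of_mem (fun x _ => hav x), Finset.card_univ]
  norm_num [Fintype.card_perm]

lemma S312_rec {n : ℕ} (hn : 1 ≤ n) (q y t : ℝ) :
    S312 n q y t = ∑ p ∈ range n,
      (if p = 0 then 1 else if n - 1 - p = 0 then t else q ^ p * y * t) *
        S312 p q y t * S312 (n - 1 - p) q y t := by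
  rw [S312, ← sum312_decomp hn (fun u v w => q ^ u * y ^ v * t ^ w), Finset.sum_sigma]
  apply Finset.sum_congr rfl
  intro p hp
  rw [Finset.sum_product]
  conv_rhs => rw [S312, S312, mul_assoc, Finset.sum_mul_sum, Finset.mul_sum]
  apply Finset.sum_congr rfl
  intro A hA
  rw [Finset.mul_sum]
  apply Finset.sum_congr rfl
  intro B hB
  rw [← mul_assoc]
  dsimp only
  rcases Nat.eq_zero_or_pos p with hp0 | hp0
  · subst hp0
    rw [if_pos rfl, if_pos rfl, ite_self,
      if_neg (by omega : ¬ ((0 : ℕ) ≠ 0 ∧ n - 1 - 0 ≠ 0))]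
    simp only [Nat.add_zero, pow_add]
    ring
  · rcases Nat.eq_zero_or_pos (n - 1 - p) with hb0 | hb0
    · rw [if_neg (by omega : ¬ p = 0), if_neg (by omega : ¬ p = 0), if_pos hb0, if_pos hb0,
        if_neg (by omega : ¬ (p ≠ 0 ∧ n - 1 - p ≠ 0))]
      simp only [hb0, pow_add, pow_one, pow_zero]
      ring
    · rw [if_neg (by omega : ¬ p = 0), if_neg (by omega : ¬ p = 0),
        if_neg (by omega : ¬ n - 1 - p = 0), if_neg (by omega : ¬ n - 1 - p = 0),
        if_pos (by omega : p ≠ 0 ∧ n - 1 - p ≠ 0)]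
      simp only [pow_add, pow_one]
      ring

lemma S213_rec {n : ℕ} (hn : 1 ≤ n) (q y t : ℝ) :
    S213 n q y t = ∑ p ∈ range n,
      (if p = 0 then 1 else if n - 1 - p = 0 then t else q ^ (n - 1 - p) * y * t) *
        S213 p q y t * S213 (n - 1 - p) q y t := by
  rw [S213, ← sum213_decomp hn (fun u v w => q ^ u * y ^ v * t ^ w), Finset.sum_sigma]
  apply Finset.sum_congr rfl
  intro p hp
  rw [Finset.sum_product]
  conv_rhs => rw [S213, S213, mul_assoc, Finset.sum_mul_sum, Finset.mul_sum]
  apply Finset.sum_congr rfl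
  intro A hA
  rw [Finset.mul_sum]
  apply Finset.sum_congr rfl
  intro B hB
  rw [← mul_assoc]
  dsimp only
  rcases Nat.eq_zero_or_pos p with hp0 | hp0
  · subst hp0
    rw [if_pos rfl, if_pos rfl, if_pos rfl,
      if_neg (by omega : ¬ ((0 : ℕ) ≠ 0 ∧ n - 1 - 0 ≠ 0))]
    simp only [Nat.add_zero, pow_add]
    ring
  · rcases Nat.eq_zero_or_pos (n - 1 - p) with hb0 | hb0
    · rw [if_neg (by omega : ¬ p = 0), if_neg (by omega : ¬ p = 0),
        if_neg (by omega : ¬ p = 0), if_pos hb0,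
        if_neg (by omega : ¬ (p ≠ 0 ∧ n - 1 - p ≠ 0))]
      simp only [hb0, pow_add, pow_one, pow_zero]
      ring
    · rw [if_neg (by omega : ¬ p = 0), if_neg (by omega : ¬ p = 0),
        if_neg (by omega : ¬ p = 0), if_neg (by omega : ¬ n - 1 - p = 0),
        if_pos (by omega : p ≠ 0 ∧ n - 1 - p ≠ 0)]
      simp only [pow_add, pow_one]
      ring

end Dev11
section Dev12
open Finset

/-- `S` lies in the span of `(yt)^k (1+t)^(m-1-2k)` -/
def Spanned (m : ℕ) (S : ℝ → ℝ → ℝ) : Prop :=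
  ∃ (M : ℕ) (γ : ℕ → ℝ), 2 * M + 1 ≤ m ∧
    ∀ y t : ℝ, S y t = ∑ k ∈ range (M + 1), γ k * (y * t) ^ k * (1 + t) ^ (m - 1 - 2 * k)

lemma spanned_congr {m : ℕ} {S T : ℝ → ℝ → ℝ} (h : ∀ y t, S y t = T y t)
    (hS : Spanned m S) : Spanned m T := by
  obtain ⟨M, γ, hM, hid⟩ := hS
  exact ⟨M, γ, hM, fun y t => (h y t) ▸ hid y t⟩

lemma spanned_one {m : ℕ} (hm : 1 ≤ m) (hm2 : m ≤ 1) : Spanned m (fun _ _ => 1) := by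
  refine ⟨0, fun _ => 1, by omega, fun y t => ?_⟩
  rw [Finset.sum_range_one]
  have : m - 1 - 2 * 0 = 0 := by omega
  rw [this]
  simp

lemma spanned_pad {M M' : ℕ} (γ : ℕ → ℝ) (h : M ≤ M') (X : ℕ → ℝ) :
    ∑ k ∈ range (M + 1), γ k * X k
      = ∑ k ∈ range (M' + 1), (if k < M + 1 then γ k else 0) * X k := by
  calc ∑ k ∈ range (M + 1), γ k * X k
      = ∑ k ∈ range (M + 1), (if k < M + 1 then γ k else 0) * X k := by
        apply Finset.sum_congr rfl
        intro k hk
        rw [Finset.mem_range] at hk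
        rw [if_pos hk]
    _ = ∑ k ∈ range (M' + 1), (if k < M + 1 then γ k else 0) * X k := by
        apply Finset.sum_subset
        · intro x hx; rw [Finset.mem_range] at hx ⊢; omega
        · intro x hx hnx
          rw [Finset.mem_range] at hnx
          rw [if_neg hnx, zero_mul]

lemma spanned_add {m : ℕ} {S T : ℝ → ℝ → ℝ} (hS : Spanned m S) (hT : Spanned m T) :
    Spanned m (fun y t => S y t + T y t) := by
  obtain ⟨M1, γ1, hM1, hid1⟩ := hS
  obtain ⟨M2, γ2, hM2, hid2⟩ := hT
  refine ⟨max M1 M2, fun k => (if k < M1 + 1 then γ1 k else 0) + (if k < M2 + 1 then γ2 k else 0),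
    by omega, fun y t => ?_⟩
  have e1 := spanned_pad (M' := max M1 M2) γ1 (le_max_left _ _)
    (fun k => (y * t) ^ k * (1 + t) ^ (m - 1 - 2 * k))
  have e2 := spanned_pad (M' := max M1 M2) γ2 (le_max_right _ _)
    (fun k => (y * t) ^ k * (1 + t) ^ (m - 1 - 2 * k))
  simp only [← mul_assoc] at e1 e2
  show S y t + T y t = _
  rw [hid1, hid2, e1, e2, ← Finset.sum_add_distrib]
  apply Finset.sum_congr rfl
  intro k hk
  ring

lemma spanned_smul {m : ℕ} (c : ℝ) {S : ℝ → ℝ → ℝ} (hS : Spanned m S) :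
    Spanned m (fun y t => c * S y t) := by
  obtain ⟨M, γ, hM, hid⟩ := hS
  refine ⟨M, fun k => c * γ k, hM, fun y t => ?_⟩
  show c * S y t = _
  rw [hid, Finset.mul_sum]
  apply Finset.sum_congr rfl
  intro k hk
  ring

lemma spanned_up {m : ℕ} {S : ℝ → ℝ → ℝ} (hS : Spanned m S) :
    Spanned (m + 1) (fun y t => (1 + t) * S y t) := by
  obtain ⟨M, γ, hM, hid⟩ := hS
  refine ⟨M, γ, by omega, fun y t => ?_⟩
  show (1 + t) * S y t = _
  rw [hid, Finset.mul_sum]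
  apply Finset.sum_congr rfl
  intro k hk
  rw [Finset.mem_range] at hk
  have e : m + 1 - 1 - 2 * k = (m - 1 - 2 * k) + 1 := by omega
  rw [e, pow_succ]
  ring

lemma spanned_sum {m : ℕ} (hm : 1 ≤ m) {ι : Type*} (s : Finset ι) (F : ι → ℝ → ℝ → ℝ)
    (h : ∀ i ∈ s, Spanned m (F i)) :
    Spanned m (fun y t => ∑ i ∈ s, F i y t) := by
  classical
  induction s using Finset.cons_induction with
  | empty =>
    refine ⟨0, fun _ => 0, by omega, fun y t => by simp⟩
  | cons i s his ih =>
    have h1 : Spanned m (F i) := h i (Finset.mem_cons_self _ _)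
    have h2 := ih (fun j hj => h j (Finset.mem_cons_of_mem hj))
    exact spanned_congr (fun y t => (Finset.sum_cons _).symm)
      (spanned_add h1 h2)

lemma spanned_combine {p b : ℕ} (hp : 1 ≤ p) (hb : 1 ≤ b) (c : ℝ)
    {S T : ℝ → ℝ → ℝ} (hS : Spanned p S) (hT : Spanned b T) :
    Spanned (p + 1 + b) (fun y t => c * y * t * S y t * T y t) := by
  obtain ⟨M1, γ1, hM1, hid1⟩ := hS
  obtain ⟨M2, γ2, hM2, hid2⟩ := hT
  refine ⟨M1 + M2 + 1, fun K => ∑ j ∈ range (M1 + 1), ∑ k ∈ range (M2 + 1),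
    (if K = j + k + 1 then c * γ1 j * γ2 k else 0), by omega, fun y t => ?_⟩
  show c * y * t * S y t * T y t = _
  rw [hid1, hid2]
  -- LHS: expand the product of sums
  rw [show c * y * t * (∑ j ∈ range (M1 + 1), γ1 j * (y * t) ^ j * (1 + t) ^ (p - 1 - 2 * j)) *
      (∑ k ∈ range (M2 + 1), γ2 k * (y * t) ^ k * (1 + t) ^ (b - 1 - 2 * k))
      = ∑ j ∈ range (M1 + 1), ∑ k ∈ range (M2 + 1),
          c * γ1 j * γ2 k * (y * t) ^ (j + k + 1) *
            (1 + t) ^ (p + 1 + b - 1 - 2 * (j + k + 1)) from ?_]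
  · -- RHS equals the same double sum
    symm
    calc ∑ K ∈ range (M1 + M2 + 1 + 1),
        (∑ j ∈ range (M1 + 1), ∑ k ∈ range (M2 + 1),
          (if K = j + k + 1 then c * γ1 j * γ2 k else 0)) * (y * t) ^ K *
          (1 + t) ^ (p + 1 + b - 1 - 2 * K)
        = ∑ K ∈ range (M1 + M2 + 1 + 1), ∑ j ∈ range (M1 + 1), ∑ k ∈ range (M2 + 1),
            (if K = j + k + 1 then c * γ1 j * γ2 k *
              ((y * t) ^ K * (1 + t) ^ (p + 1 + b - 1 - 2 * K)) else 0) := by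
          apply Finset.sum_congr rfl
          intro K _
          rw [mul_assoc, Finset.sum_mul]
          apply Finset.sum_congr rfl
          intro j _
          rw [Finset.sum_mul]
          apply Finset.sum_congr rfl
          intro k _
          rw [ite_mul, zero_mul, mul_assoc]
      _ = ∑ j ∈ range (M1 + 1), ∑ k ∈ range (M2 + 1), ∑ K ∈ range (M1 + M2 + 1 + 1),
            (if K = j + k + 1 then c * γ1 j * γ2 k *
              ((y * t) ^ K * (1 + t) ^ (p + 1 + b - 1 - 2 * K)) else 0) := by
          rw [Finset.sum_comm]
          apply Finset.sum_congr rfl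
          intro j _
          rw [Finset.sum_comm]
      _ = ∑ j ∈ range (M1 + 1), ∑ k ∈ range (M2 + 1),
            c * γ1 j * γ2 k * ((y * t) ^ (j + k + 1) *
              (1 + t) ^ (p + 1 + b - 1 - 2 * (j + k + 1))) := by
          apply Finset.sum_congr rfl
          intro j hj
          apply Finset.sum_congr rfl
          intro k hk
          rw [Finset.mem_range] at hj hk
          rw [Finset.sum_ite_eq' (range (M1 + M2 + 1 + 1)) (j + k + 1)
            (fun K => c * γ1 j * γ2 k * ((y * t) ^ K * (1 + t) ^ (p + 1 + b - 1 - 2 * K)))]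
          rw [if_pos (by rw [Finset.mem_range]; omega)]
      _ = ∑ j ∈ range (M1 + 1), ∑ k ∈ range (M2 + 1),
            c * γ1 j * γ2 k * (y * t) ^ (j + k + 1) *
              (1 + t) ^ (p + 1 + b - 1 - 2 * (j + k + 1)) := by
          apply Finset.sum_congr rfl
          intro j _
          apply Finset.sum_congr rfl
          intro k _
          ring
  · rw [mul_assoc, Finset.sum_mul_sum, Finset.mul_sum]
    apply Finset.sum_congr rfl
    intro j hj
    rw [Finset.mul_sum]
    apply Finset.sum_congr rfl
    intro k hk
    rw [Finset.mem_range] at hj hk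
    have e : p + 1 + b - 1 - 2 * (j + k + 1) = (p - 1 - 2 * j) + (b - 1 - 2 * k) := by omega
    rw [e, pow_add, pow_add, pow_add, pow_one]
    ring

end Dev12
section Dev13
open Finset

lemma spanned_of_rec (S : ℕ → ℝ → ℝ → ℝ) (e : ℕ → ℕ → ℕ) (q : ℝ)
    (h0 : ∀ y t : ℝ, S 0 y t = 1)
    (hrec : ∀ n : ℕ, 1 ≤ n → ∀ y t : ℝ, S n y t = ∑ p ∈ range n,
      (if p = 0 then 1 else if n - 1 - p = 0 then t else q ^ (e n p) * y * t) *
        S p y t * S (n - 1 - p) y t) :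
    ∀ n : ℕ, 1 ≤ n → Spanned n (fun y t => S n y t) := by
  intro n
  induction n using Nat.strong_induction_on with
  | _ n IH =>
    intro hn
    rcases Nat.lt_or_ge n 2 with hn2 | hn2
    · -- n = 1
      have hn1 : n = 1 := by omega
      subst hn1
      have key : ∀ y t : ℝ, S 1 y t = 1 := by
        intro y t
        rw [hrec 1 (by omega), Finset.sum_range_one, if_pos rfl, h0]
        ring
      exact spanned_congr (fun y t => (key y t).symm) (spanned_one (by omega) (by omega))
    · -- n ≥ 2
      have key : ∀ y t : ℝ, S n y t = (1 + t) * S (n - 1) y t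
          + ∑ p ∈ Ico 1 (n - 1), q ^ (e n p) * y * t * S p y t * S (n - 1 - p) y t := by
        intro y t
        rw [hrec n hn, Finset.range_eq_Ico,
          Finset.sum_eq_sum_Ico_succ_bot (by omega : 0 < n)]
        have hsp : ∑ p ∈ Ico 1 n,
            (if p = 0 then 1 else if n - 1 - p = 0 then t else q ^ (e n p) * y * t) *
              S p y t * S (n - 1 - p) y t
            = (∑ p ∈ Ico 1 (n - 1),
            (if p = 0 then 1 else if n - 1 - p = 0 then t else q ^ (e n p) * y * t) *
              S p y t * S (n - 1 - p) y t)
            + (if n - 1 = 0 then 1 else if n - 1 - (n - 1) = 0 then t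
                else q ^ (e n (n - 1)) * y * t) * S (n - 1) y t * S (n - 1 - (n - 1)) y t := by
          rw [← Finset.sum_Ico_succ_top (by omega : 1 ≤ n - 1), show n - 1 + 1 = n by omega]
        rw [hsp]
        rw [if_pos rfl, if_neg (by omega : ¬ n - 1 = 0),
          if_pos (by omega : n - 1 - (n - 1) = 0), show n - 1 - (n - 1) = 0 by omega,
          show n - 1 - 0 = n - 1 by omega, h0]
        have hmid : ∑ p ∈ Ico 1 (n - 1),
            (if p = 0 then 1 else if n - 1 - p = 0 then t else q ^ (e n p) * y * t) *
              S p y t * S (n - 1 - p) y t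
            = ∑ p ∈ Ico 1 (n - 1), q ^ (e n p) * y * t * S p y t * S (n - 1 - p) y t :=
          Finset.sum_congr rfl (fun p hp => by
            rw [Finset.mem_Ico] at hp
            rw [if_neg (by omega : ¬ p = 0), if_neg (by omega : ¬ n - 1 - p = 0)])
        rw [hmid]
        ring
      apply spanned_congr (fun y t => (key y t).symm)
      apply spanned_add
      · have h1 := spanned_up (IH (n - 1) (by omega) (by omega))
        rw [show n - 1 + 1 = n by omega] at h1
        exact h1
      · apply spanned_sum (by omega)
        intro p hp
        rw [Finset.mem_Ico] at hp
        have hcomb := spanned_combine (p := p) (b := n - 1 - p) (by omega) (by omega)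
          (q ^ (e n p)) (IH p (by omega) (by omega)) (IH (n - 1 - p) (by omega) (by omega))
        rw [show p + 1 + (n - 1 - p) = n by omega] at hcomb
        exact spanned_congr (fun y t => rfl) hcomb

lemma spanned_S312 (q : ℝ) (n : ℕ) (hn : 1 ≤ n) : Spanned n (fun y t => S312 n q y t) :=
  spanned_of_rec (fun m y t => S312 m q y t) (fun _ p => p) q
    (fun y t => S312_zero q y t) (fun m hm y t => S312_rec hm q y t) n hn

lemma spanned_S213 (q : ℝ) (n : ℕ) (hn : 1 ≤ n) : Spanned n (fun y t => S213 n q y t) :=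
  spanned_of_rec (fun m y t => S213 m q y t) (fun m p => m - 1 - p) q
    (fun y t => S213_zero q y t) (fun m hm y t => S213_rec hm q y t) n hn

end Dev13
section Dev14
open Finset

lemma pow_shuffle (P Q T u g : ℝ) (hP : P ≠ 0) (hQ : Q ≠ 0) (k E : ℕ) :
    g * T ^ k * u ^ E = (Q / P) ^ (2 * k + E) * (g * (P ^ 2 * T / Q ^ 2) ^ k * (P * u / Q) ^ E) := by
  rw [div_pow, div_pow, div_pow, mul_pow, mul_pow, ← pow_mul, ← pow_mul, pow_add, pow_add]
  field_simp

lemma span_transform (x t : ℝ) (hP : 1 + x ≠ 0) (hR : x + t ≠ 0) (hQ : 1 + x * t ≠ 0)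
    (n M : ℕ) (hn : 1 ≤ n) (γ : ℕ → ℝ) (hM : 2 * M + 1 ≤ n) :
    ∑ k ∈ range (M + 1), γ k * (1 * t) ^ k * (1 + t) ^ (n - 1 - 2 * k)
    = ((1 + x * t) / (1 + x)) ^ (n - 1) * ∑ k ∈ range (M + 1),
        γ k * ((1 + x) ^ 2 * t / ((x + t) * (1 + x * t)) * ((x + t) / (1 + x * t))) ^ k *
          (1 + (x + t) / (1 + x * t)) ^ (n - 1 - 2 * k) := by
  rw [Finset.mul_sum]
  apply Finset.sum_congr rfl
  intro k hk
  rw [Finset.mem_range] at hk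
  have hwu : (1 + x) ^ 2 * t / ((x + t) * (1 + x * t)) * ((x + t) / (1 + x * t))
      = (1 + x) ^ 2 * t / (1 + x * t) ^ 2 := by
    field_simp
  have hu1 : 1 + (x + t) / (1 + x * t) = (1 + x) * (1 + t) / (1 + x * t) := by
    field_simp
    ring
  rw [hwu, hu1, one_mul]
  set E := n - 1 - 2 * k with hE
  have hn1 : n - 1 = 2 * k + E := by omega
  rw [hn1]
  exact pow_shuffle (1 + x) (1 + x * t) t (1 + t) (γ k) hP hQ k E

end Dev14

theorem stmt2 (n : ℕ) (hn : 1 ≤ n) (q x t : ℝ) (h : (1 + x) * (x + t) * (1 + x * t) ≠ 0) :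
    (∑ σ ∈ Finset.univ.filter (fun σ : Equiv.Perm (Fin n) => Avoids213 σ),
        q ^ p31_2 σ * t ^ des σ =
      ((1 + x * t) / (1 + x)) ^ (n - 1) *
        ∑ σ ∈ Finset.univ.filter (fun σ : Equiv.Perm (Fin n) => Avoids213 σ),
          q ^ p31_2 σ * ((1 + x) ^ 2 * t / ((x + t) * (1 + x * t))) ^ vall σ * ((x + t) / (1 + x * t)) ^ des σ) ∧
    (∑ σ ∈ Finset.univ.filter (fun σ : Equiv.Perm (Fin n) => Avoids312 σ),
        q ^ p2_13 σ * t ^ des σ =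
      ((1 + x * t) / (1 + x)) ^ (n - 1) *
        ∑ σ ∈ Finset.univ.filter (fun σ : Equiv.Perm (Fin n) => Avoids312 σ),
          q ^ p2_13 σ * ((1 + x) ^ 2 * t / ((x + t) * (1 + x * t))) ^ vall σ * ((x + t) / (1 + x * t)) ^ des σ) := by
  have hP : (1 : ℝ) + x ≠ 0 := fun hh => h (by rw [hh]; ring)
  have hR : x + t ≠ 0 := fun hh => h (by rw [hh]; ring)
  have hQ : (1 : ℝ) + x * t ≠ 0 := fun hh => h (by rw [hh]; ring)
  constructor
  · obtain ⟨M, γ, hM, hid⟩ := spanned_S213 q n hn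
    have e1 : S213 n q 1 t
        = ∑ k ∈ Finset.range (M + 1), γ k * (1 * t) ^ k * (1 + t) ^ (n - 1 - 2 * k) := hid 1 t
    have e2 : S213 n q ((1 + x) ^ 2 * t / ((x + t) * (1 + x * t))) ((x + t) / (1 + x * t))
        = ∑ k ∈ Finset.range (M + 1),
            γ k * ((1 + x) ^ 2 * t / ((x + t) * (1 + x * t)) * ((x + t) / (1 + x * t))) ^ k *
              (1 + (x + t) / (1 + x * t)) ^ (n - 1 - 2 * k) :=
      hid ((1 + x) ^ 2 * t / ((x + t) * (1 + x * t))) ((x + t) / (1 + x * t))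
    have hLHS : S213 n q 1 t
        = ∑ σ ∈ Finset.univ.filter (fun σ : Equiv.Perm (Fin n) => Avoids213 σ),
            q ^ p31_2 σ * t ^ des σ := by
      rw [S213]
      exact Finset.sum_congr rfl (fun σ _ => by rw [one_pow, mul_one])
    have hRHS : S213 n q ((1 + x) ^ 2 * t / ((x + t) * (1 + x * t))) ((x + t) / (1 + x * t))
        = ∑ σ ∈ Finset.univ.filter (fun σ : Equiv.Perm (Fin n) => Avoids213 σ),
            q ^ p31_2 σ * ((1 + x) ^ 2 * t / ((x + t) * (1 + x * t))) ^ vall σ *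
              ((x + t) / (1 + x * t)) ^ des σ := by
      rw [S213]
    rw [← hLHS, ← hRHS, e1, e2]
    exact span_transform x t hP hR hQ n M hn γ hM
  · obtain ⟨M, γ, hM, hid⟩ := spanned_S312 q n hn
    have e1 : S312 n q 1 t
        = ∑ k ∈ Finset.range (M + 1), γ k * (1 * t) ^ k * (1 + t) ^ (n - 1 - 2 * k) := hid 1 t
    have e2 : S312 n q ((1 + x) ^ 2 * t / ((x + t) * (1 + x * t))) ((x + t) / (1 + x * t))
        = ∑ k ∈ Finset.range (M + 1),
            γ k * ((1 + x) ^ 2 * t / ((x + t) * (1 + x * t)) * ((x + t) / (1 + x * t))) ^ k *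
              (1 + (x + t) / (1 + x * t)) ^ (n - 1 - 2 * k) :=
      hid ((1 + x) ^ 2 * t / ((x + t) * (1 + x * t))) ((x + t) / (1 + x * t))
    have hLHS : S312 n q 1 t
        = ∑ σ ∈ Finset.univ.filter (fun σ : Equiv.Perm (Fin n) => Avoids312 σ),
            q ^ p2_13 σ * t ^ des σ := by
      rw [S312]
      exact Finset.sum_congr rfl (fun σ _ => by rw [one_pow, mul_one])
    have hRHS : S312 n q ((1 + x) ^ 2 * t / ((x + t) * (1 + x * t))) ((x + t) / (1 + x * t))
        = ∑ σ ∈ Finset.univ.filter (fun σ : Equiv.Perm (Fin n) => Avoids312 σ),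
            q ^ p2_13 σ * ((1 + x) ^ 2 * t / ((x + t) * (1 + x * t))) ^ vall σ *
              ((x + t) / (1 + x * t)) ^ des σ := by
      rw [S312]
    rw [← hLHS, ← hRHS, e1, e2]
    exact span_transform x t hP hR hQ n M hn γ hM

end EulerExc
end
end

section
/- For every integer n ≥ 1 and all real numbers q, x, t with (1+x)(x+t)(1+xt) ≠ 0, one has Σ_{σ∈D_n(321)} q^{inv σ} t^{exc σ} = ((1+xt)/(1+x))^{n} · Σ_{σ∈D_n(321)} q^{inv σ} · ((1+x)² t/((x+t)(1+xt)))^{cpk σ} · ((x+t)/(1+xt))^{exc σ}. -/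
open Finset

open scoped Classical

noncomputable section

namespace EulerExc

variable {n : ℕ}

/-! ### Auxiliary development for `stmt7` -/

section Stmt7Aux

variable {n : ℕ}

lemma aux_card_filter_lt (a : Fin n) : (univ.filter fun k : Fin n => k < a).card = a := by
  have h : (univ.filter fun k : Fin n => k < a) = Finset.Iio a := by ext k; simp
  rw [h, Fin.card_Iio]

lemma aux_card_filter_gt (a : Fin n) :
    (univ.filter fun k : Fin n => a < k).card = n - 1 - a := by
  have h : (univ.filter fun k : Fin n => a < k) = Finset.Ioi a := by ext k; simp
  rw [h, Fin.card_Ioi]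

lemma aux_card_filter_apply_lt (σ : Equiv.Perm (Fin n)) (a : Fin n) :
    (univ.filter fun k => σ k < a).card = a := by
  rw [← aux_card_filter_lt a]
  apply Finset.card_bij (fun k _ => σ k)
  · intro k hk; simp only [mem_filter, mem_univ, true_and] at hk ⊢; exact hk
  · intro k _ l _ hkl; exact σ.injective hkl
  · intro m hm
    simp only [mem_filter, mem_univ, true_and] at hm
    exact ⟨σ⁻¹ m, by simp [hm], by simp⟩

lemma aux_card_filter_apply_gt (σ : Equiv.Perm (Fin n)) (a : Fin n) :
    (univ.filter fun k => a < σ k).card = n - 1 - a := by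
  rw [← aux_card_filter_gt a]
  apply Finset.card_bij (fun k _ => σ k)
  · intro k hk; simp only [mem_filter, mem_univ, true_and] at hk ⊢; exact hk
  · intro k _ l _ hkl; exact σ.injective hkl
  · intro m hm
    simp only [mem_filter, mem_univ, true_and] at hm
    exact ⟨σ⁻¹ m, by simp [hm], by simp⟩

lemma exists_later_smaller (σ : Equiv.Perm (Fin n)) {y : Fin n} (hy : y < σ y) :
    ∃ k, y < k ∧ σ k < σ y := by
  by_contra hc
  push_neg at hc
  have hsub : (univ.filter fun k => σ k < σ y) ⊆ Finset.Iio y := by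
    intro k hk
    simp only [mem_filter, mem_univ, true_and] at hk
    simp only [Finset.mem_Iio]
    rcases lt_trichotomy k y with h | h | h
    · exact h
    · exact absurd hk (by rw [h]; exact lt_irrefl _)
    · exact absurd hk (not_lt.mpr (hc k h))
  have h1 := Finset.card_le_card hsub
  rw [aux_card_filter_apply_lt, Fin.card_Iio] at h1
  have : (y : ℕ) < (σ y : ℕ) := hy
  omega

lemma exists_earlier_bigger (σ : Equiv.Perm (Fin n)) {y : Fin n} (hy : σ y < y) :
    ∃ k, k < y ∧ σ y < σ k := by
  by_contra hc
  push_neg at hc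
  have hsub : (univ.filter fun k => σ y < σ k) ⊆ Finset.Ioi y := by
    intro k hk
    simp only [mem_filter, mem_univ, true_and] at hk
    simp only [Finset.mem_Ioi]
    rcases lt_trichotomy k y with h | h | h
    · exact absurd hk (not_lt.mpr (hc k h))
    · exact absurd hk (by rw [h]; exact lt_irrefl _)
    · exact h
  have h1 := Finset.card_le_card hsub
  rw [aux_card_filter_apply_gt, Fin.card_Ioi] at h1
  have h2 : (σ y : ℕ) < (y : ℕ) := hy
  have h3 : (y : ℕ) < n := y.isLt
  omega

lemma mono_exc {σ : Equiv.Perm (Fin n)} (hσ : Avoids321 σ) {x y : Fin n}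
    (hxy : x < y) (hx : x < σ x) (hy : y < σ y) : σ x < σ y := by
  by_contra hcon
  have h1 : σ y < σ x :=
    lt_of_le_of_ne (not_lt.mp hcon) fun hh => (ne_of_lt hxy) (σ.injective hh.symm)
  obtain ⟨k, hyk, hk⟩ := exists_later_smaller σ hy
  exact hσ ⟨x, y, k, hxy, hyk, hk, h1⟩

lemma mono_drop {σ : Equiv.Perm (Fin n)} (hσ : Avoids321 σ) {x y : Fin n}
    (hxy : x < y) (hx : σ x < x) (hy : σ y < y) : σ x < σ y := by
  by_contra hcon
  have h1 : σ y < σ x :=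
    lt_of_le_of_ne (not_lt.mp hcon) fun hh => (ne_of_lt hxy) (σ.injective hh.symm)
  obtain ⟨k, hkx, hk⟩ := exists_earlier_bigger σ hx
  exact hσ ⟨k, x, y, hkx, hxy, h1, hk⟩

/-- excedance positions -/
def Eset (σ : Equiv.Perm (Fin n)) : Finset (Fin n) := univ.filter fun x => x < σ x

/-- excedance values -/
def Vset (σ : Equiv.Perm (Fin n)) : Finset (Fin n) := univ.filter fun x => σ⁻¹ x < x

lemma mem_Eset {σ : Equiv.Perm (Fin n)} {x : Fin n} : x ∈ Eset σ ↔ x < σ x := by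
  simp [Eset]

lemma mem_Vset {σ : Equiv.Perm (Fin n)} {x : Fin n} : x ∈ Vset σ ↔ σ⁻¹ x < x := by
  simp [Vset]

lemma Vset_eq_image (σ : Equiv.Perm (Fin n)) : Vset σ = (Eset σ).image σ := by
  ext x
  simp only [mem_Vset, Finset.mem_image, mem_Eset]
  constructor
  · intro hx; exact ⟨σ⁻¹ x, by simpa using hx, by simp⟩
  · rintro ⟨y, hy, rfl⟩; simpa using hy

lemma card_Vset (σ : Equiv.Perm (Fin n)) : (Vset σ).card = (Eset σ).card := by
  rw [Vset_eq_image, Finset.card_image_of_injective _ σ.injective]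

/-- validity of a pair of candidate (excedance positions, excedance values) -/
def Valid (E V : Finset (Fin n)) : Prop :=
  E.card = V.card ∧
  (∀ y : Fin n, (V.filter (· ≤ y)).card ≤ (E.filter (· ≤ y)).card) ∧
  (∀ y ∈ E, (V.filter (· ≤ y)).card < (E.filter (· ≤ y)).card) ∧
  (∀ y : Fin n, y ∉ V → (V.filter (· ≤ y)).card < (E.filter (· ≤ y)).card)

lemma filter_compl_count (s : Finset (Fin n)) (y : Fin n) :
    (s.filter (· ≤ y)).card + (sᶜ.filter (· ≤ y)).card = (y : ℕ) + 1 := by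
  have hd : Disjoint (s.filter (· ≤ y)) (sᶜ.filter (· ≤ y)) :=
    Finset.disjoint_filter_filter disjoint_compl_right
  have hu : s.filter (· ≤ y) ∪ sᶜ.filter (· ≤ y) = Finset.Iic y := by
    ext z
    simp only [Finset.mem_union, Finset.mem_filter, Finset.mem_compl, Finset.mem_Iic]
    by_cases hz : z ∈ s <;> simp [hz]
  have := Finset.card_union_of_disjoint hd
  rw [hu, Fin.card_Iic] at this
  omega

lemma valid_of_perm {σ : Equiv.Perm (Fin n)} (hd : IsDerangement σ) :
    Valid (Eset σ) (Vset σ) := by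
  have hVE : ∀ y : Fin n, ∀ v ∈ (Vset σ).filter (· ≤ y), σ⁻¹ v ∈ (Eset σ).filter (· ≤ y) := by
    intro y v hv
    rw [Finset.mem_filter] at hv ⊢
    obtain ⟨hv1, hv2⟩ := hv
    rw [mem_Vset] at hv1
    exact ⟨mem_Eset.mpr (by simpa using hv1), le_trans hv1.le hv2⟩
  have hinj : ∀ (s : Finset (Fin n)), Set.InjOn (fun v => σ⁻¹ v) s :=
    fun s a _ b _ h => (σ⁻¹ : Equiv.Perm (Fin n)).injective h
  refine ⟨(card_Vset σ).symm, ?_, ?_, ?_⟩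
  · intro y
    exact Finset.card_le_card_of_injOn _ (hVE y) (hinj _)
  · intro y hy
    have h1 : ∀ v ∈ (Vset σ).filter (· ≤ y), σ⁻¹ v ∈ ((Eset σ).filter (· ≤ y)).erase y := by
      intro v hv
      rw [Finset.mem_erase]
      refine ⟨?_, hVE y v hv⟩
      intro hvy
      rw [Finset.mem_filter, mem_Vset] at hv
      rw [mem_Eset] at hy
      have hyv : σ y = v := by rw [← hvy]; simp
      exact absurd (hyv ▸ hy) (not_lt.mpr hv.2)
    have h2 := Finset.card_le_card_of_injOn _ h1 (hinj _)
    have h3 : y ∈ (Eset σ).filter (· ≤ y) := Finset.mem_filter.mpr ⟨hy, le_refl y⟩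
    have h4 := Finset.card_erase_of_mem h3
    have h5 := Finset.card_pos.mpr ⟨y, h3⟩
    omega
  · intro y hy
    have hmap : ∀ d ∈ (Eset σ)ᶜ.filter (· ≤ y), σ d ∈ ((Vset σ)ᶜ.filter (· ≤ y)).erase y := by
      intro d hdm
      rw [Finset.mem_filter, Finset.mem_compl, mem_Eset] at hdm
      obtain ⟨hd1, hd2⟩ := hdm
      have hdrop : σ d < d := lt_of_le_of_ne (not_lt.mp hd1) (hd d)
      rw [Finset.mem_erase, Finset.mem_filter, Finset.mem_compl, mem_Vset]
      refine ⟨ne_of_lt (lt_of_lt_of_le hdrop hd2), ?_, le_trans hdrop.le hd2⟩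
      simpa using hd1
    have hinj2 : Set.InjOn (fun d => σ d) ((Eset σ)ᶜ.filter (· ≤ y)) :=
      fun a _ b _ h => σ.injective h
    have h2 := Finset.card_le_card_of_injOn _ hmap hinj2
    have h3 : y ∈ (Vset σ)ᶜ.filter (· ≤ y) :=
      Finset.mem_filter.mpr ⟨Finset.mem_compl.mpr hy, le_refl y⟩
    have h4 := Finset.card_erase_of_mem h3
    have h5 := Finset.card_pos.mpr ⟨y, h3⟩
    have hc1 := filter_compl_count (Eset σ) y
    have hc2 := filter_compl_count (Vset σ) y
    omega

lemma aux_rank {s : Finset (Fin n)} {k : ℕ} (hk : s.card = k) (i : Fin k) :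
    (s.filter (· ≤ s.orderEmbOfFin hk i)).card = (i : ℕ) + 1 := by
  have himg : s.filter (· ≤ s.orderEmbOfFin hk i) = (Finset.Iic i).image (s.orderEmbOfFin hk) := by
    ext x
    simp only [Finset.mem_filter, Finset.mem_image, Finset.mem_Iic]
    constructor
    · rintro ⟨hxs, hxle⟩
      have hrange : x ∈ Set.range (s.orderEmbOfFin hk) := by
        rw [Finset.range_orderEmbOfFin]; exact hxs
      obtain ⟨j, rfl⟩ := hrange
      exact ⟨j, (s.orderEmbOfFin hk).le_iff_le.mp hxle, rfl⟩
    · rintro ⟨j, hj, rfl⟩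
      exact ⟨Finset.orderEmbOfFin_mem s hk j, (s.orderEmbOfFin hk).le_iff_le.mpr hj⟩
  rw [himg, Finset.card_image_of_injective _ (s.orderEmbOfFin hk).injective, Fin.card_Iic]

lemma aux_emb_symm {s : Finset (Fin n)} {x : Fin n} (hx : x ∈ s) :
    s.orderEmbOfFin rfl ((s.orderIsoOfFin rfl).symm ⟨x, hx⟩) = x := by
  have h := Finset.coe_orderIsoOfFin_apply s rfl ((s.orderIsoOfFin rfl).symm ⟨x, hx⟩)
  rw [OrderIso.apply_symm_apply] at h
  exact h.symm

lemma compl_card {E V : Finset (Fin n)} (h : E.card = V.card) : Vᶜ.card = Eᶜ.card := by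
  rw [Finset.card_compl, Finset.card_compl, h]

/-- the underlying function of the permutation built from a pair (E, V) -/
def bpFun (E V : Finset (Fin n)) (x : Fin n) : Fin n :=
  if h : E.card = V.card then
    if hx : x ∈ E then V.orderEmbOfFin h.symm ((E.orderIsoOfFin rfl).symm ⟨x, hx⟩)
    else Vᶜ.orderEmbOfFin (compl_card h) ((Eᶜ.orderIsoOfFin rfl).symm ⟨x, Finset.mem_compl.mpr hx⟩)
  else x

lemma bpFun_mem {E V : Finset (Fin n)} (h : E.card = V.card) {x : Fin n} (hx : x ∈ E) :
    bpFun E V x ∈ V := by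
  rw [bpFun, dif_pos h, dif_pos hx]; exact Finset.orderEmbOfFin_mem _ _ _

lemma bpFun_not_mem {E V : Finset (Fin n)} (h : E.card = V.card) {x : Fin n} (hx : x ∉ E) :
    bpFun E V x ∉ V := by
  rw [bpFun, dif_pos h, dif_neg hx]
  have := Finset.orderEmbOfFin_mem Vᶜ (compl_card h)
    ((Eᶜ.orderIsoOfFin rfl).symm ⟨x, Finset.mem_compl.mpr hx⟩)
  exact Finset.mem_compl.mp this

lemma bpFun_injective (E V : Finset (Fin n)) : Function.Injective (bpFun E V) := by
  intro a b hab
  by_cases h : E.card = V.card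
  · by_cases ha : a ∈ E <;> by_cases hb : b ∈ E
    · simp only [bpFun, dif_pos h, dif_pos ha, dif_pos hb] at hab
      have h1 := (V.orderEmbOfFin h.symm).injective hab
      simpa using Subtype.ext_iff.mp ((E.orderIsoOfFin rfl).symm.injective h1)
    · exact absurd ((hab ▸ bpFun_mem h ha : bpFun E V b ∈ V)) (bpFun_not_mem h hb)
    · exact absurd ((hab ▸ bpFun_not_mem h ha : bpFun E V b ∉ V)) (not_not.mpr (bpFun_mem h hb))
    · simp only [bpFun, dif_pos h, dif_neg ha, dif_neg hb] at hab
      have h1 := (Vᶜ.orderEmbOfFin (compl_card h)).injective hab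
      simpa using Subtype.ext_iff.mp ((Eᶜ.orderIsoOfFin rfl).symm.injective h1)
  · rw [bpFun, dif_neg h] at hab; rwa [bpFun, dif_neg h] at hab

/-- the permutation built from a pair (E, V) -/
def bperm (E V : Finset (Fin n)) : Equiv.Perm (Fin n) :=
  Equiv.ofBijective (bpFun E V) (Finite.injective_iff_bijective.mp (bpFun_injective E V))

lemma bperm_apply (E V : Finset (Fin n)) (x : Fin n) : bperm E V x = bpFun E V x := rfl

lemma bperm_lt {E V : Finset (Fin n)} (hV : Valid E V) {x : Fin n} (hx : x ∈ E) :
    x < bperm E V x := by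
  obtain ⟨hc, h0, h1, h2⟩ := hV
  set i := (E.orderIsoOfFin rfl).symm ⟨x, hx⟩ with hi
  have hbp : bperm E V x = V.orderEmbOfFin hc.symm i := by
    rw [bperm_apply, bpFun, dif_pos hc, dif_pos hx]
  by_contra hle
  push_neg at hle
  rw [hbp] at hle
  have hVc : (i : ℕ) + 1 ≤ (V.filter (· ≤ x)).card := by
    rw [← aux_rank hc.symm i]
    exact Finset.card_le_card (Finset.monotone_filter_right _ (fun z _ hz => le_trans hz hle))
  have hEc : (E.filter (· ≤ x)).card = (i : ℕ) + 1 := by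
    have h := aux_rank (s := E) rfl i
    rwa [aux_emb_symm hx] at h
  have := h1 x hx
  omega

lemma bperm_gt {E V : Finset (Fin n)} (hV : Valid E V) {x : Fin n} (hx : x ∉ E) :
    bperm E V x < x := by
  obtain ⟨hc, h0, h1, h2⟩ := hV
  have hxc : x ∈ Eᶜ := Finset.mem_compl.mpr hx
  set r := (Eᶜ.orderIsoOfFin rfl).symm ⟨x, hxc⟩ with hr
  have hbp : bperm E V x = Vᶜ.orderEmbOfFin (compl_card hc) r := by
    rw [bperm_apply, bpFun, dif_pos hc, dif_neg hx]
  by_contra hle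
  push_neg at hle
  rw [hbp] at hle
  set w := Vᶜ.orderEmbOfFin (compl_card hc) r with hw
  have hD : (Eᶜ.filter (· ≤ x)).card = (r : ℕ) + 1 := by
    have h := aux_rank (s := Eᶜ) rfl r
    rwa [aux_emb_symm hxc] at h
  have hc1 := filter_compl_count E x
  have hc2 := filter_compl_count V x
  by_cases hxV : x ∈ V
  · -- x ∈ V, so x ≠ w and Vᶜ ∩ [0,x] ⊆ {w_j : j < r}
    have hxw : x ≠ w := by
      intro hh
      have : w ∈ Vᶜ := Finset.orderEmbOfFin_mem _ _ _
      rw [← hh, Finset.mem_compl] at this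
      exact this hxV
    have hltw : x < w := lt_of_le_of_ne hle hxw
    have hsub : Vᶜ.filter (· ≤ x) ⊆ (Finset.Iio r).image (Vᶜ.orderEmbOfFin (compl_card hc)) := by
      intro u hu
      rw [Finset.mem_filter] at hu
      have hrange : u ∈ Set.range (Vᶜ.orderEmbOfFin (compl_card hc)) := by
        rw [Finset.range_orderEmbOfFin]; exact hu.1
      obtain ⟨j, rfl⟩ := hrange
      rw [Finset.mem_image]
      refine ⟨j, ?_, rfl⟩
      rw [Finset.mem_Iio]
      have : Vᶜ.orderEmbOfFin (compl_card hc) j < w := lt_of_le_of_lt hu.2 hltw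
      exact (Vᶜ.orderEmbOfFin (compl_card hc)).lt_iff_lt.mp this
    have hWc : (Vᶜ.filter (· ≤ x)).card ≤ (r : ℕ) :=
      le_trans (le_trans (Finset.card_le_card hsub) (Finset.card_image_le)) (le_of_eq (Fin.card_Iio r))
    have := h0 x
    omega
  · have hsub : Vᶜ.filter (· ≤ x) ⊆ (Finset.Iic r).image (Vᶜ.orderEmbOfFin (compl_card hc)) := by
      intro u hu
      rw [Finset.mem_filter] at hu
      have hrange : u ∈ Set.range (Vᶜ.orderEmbOfFin (compl_card hc)) := by
        rw [Finset.range_orderEmbOfFin]; exact hu.1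
      obtain ⟨j, rfl⟩ := hrange
      rw [Finset.mem_image]
      refine ⟨j, ?_, rfl⟩
      rw [Finset.mem_Iic]
      have : Vᶜ.orderEmbOfFin (compl_card hc) j ≤ w := le_trans hu.2 hle
      exact (Vᶜ.orderEmbOfFin (compl_card hc)).le_iff_le.mp this
    have hWc : (Vᶜ.filter (· ≤ x)).card ≤ (r : ℕ) + 1 :=
      le_trans (le_trans (Finset.card_le_card hsub) (Finset.card_image_le)) (le_of_eq (Fin.card_Iic r))
    have := h2 x hxV
    omega

lemma bperm_mono_mem {E V : Finset (Fin n)} (hc : E.card = V.card) {x y : Fin n}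
    (hx : x ∈ E) (hy : y ∈ E) (hxy : x < y) : bperm E V x < bperm E V y := by
  rw [bperm_apply, bperm_apply]
  simp only [bpFun, dif_pos hc, dif_pos hx, dif_pos hy]
  rw [(V.orderEmbOfFin hc.symm).lt_iff_lt, OrderIso.lt_iff_lt]
  exact hxy

lemma bperm_mono_not_mem {E V : Finset (Fin n)} (hc : E.card = V.card) {x y : Fin n}
    (hx : x ∉ E) (hy : y ∉ E) (hxy : x < y) : bperm E V x < bperm E V y := by
  rw [bperm_apply, bperm_apply]
  simp only [bpFun, dif_pos hc, dif_neg hx, dif_neg hy]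
  rw [(Vᶜ.orderEmbOfFin (compl_card hc)).lt_iff_lt, OrderIso.lt_iff_lt]
  exact hxy

lemma bperm_isDerangement {E V : Finset (Fin n)} (hV : Valid E V) :
    IsDerangement (bperm E V) := by
  intro x
  by_cases hx : x ∈ E
  · exact ne_of_gt (bperm_lt hV hx)
  · exact ne_of_lt (bperm_gt hV hx)

lemma bperm_avoids {E V : Finset (Fin n)} (hV : Valid E V) : Avoids321 (bperm E V) := by
  rintro ⟨i, j, k, hij, hjk, h1, h2⟩
  have hc := hV.1
  by_cases hi : i ∈ E <;> by_cases hj : j ∈ E <;> by_cases hk : k ∈ E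
  · exact absurd (bperm_mono_mem hc hi hj hij) (not_lt.mpr h2.le)
  · exact absurd (bperm_mono_mem hc hi hj hij) (not_lt.mpr h2.le)
  · exact absurd (bperm_mono_mem hc hi hk (hij.trans hjk)) (not_lt.mpr (h1.trans h2).le)
  · exact absurd (bperm_mono_not_mem hc hj hk hjk) (not_lt.mpr h1.le)
  · exact absurd (bperm_mono_mem hc hj hk hjk) (not_lt.mpr h1.le)
  · exact absurd (bperm_mono_not_mem hc hi hk (hij.trans hjk)) (not_lt.mpr (h1.trans h2).le)
  · exact absurd (bperm_mono_not_mem hc hi hj hij) (not_lt.mpr h2.le)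
  · exact absurd (bperm_mono_not_mem hc hi hj hij) (not_lt.mpr h2.le)

lemma Eset_bperm {E V : Finset (Fin n)} (hV : Valid E V) : Eset (bperm E V) = E := by
  ext x
  rw [mem_Eset]
  constructor
  · intro hx
    by_contra hxE
    exact absurd hx (not_lt.mpr (bperm_gt hV hxE).le)
  · exact bperm_lt hV

lemma Vset_bperm {E V : Finset (Fin n)} (hV : Valid E V) : Vset (bperm E V) = V := by
  ext x
  rw [mem_Vset]
  set y := (bperm E V)⁻¹ x with hy
  have hyx : bperm E V y = x := by rw [hy]; simp
  constructor
  · intro hx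
    by_contra hxV
    have hyE : y ∉ E := by
      intro hyE
      exact hxV (hyx ▸ bpFun_mem hV.1 hyE)
    have := bperm_gt hV hyE
    rw [hyx] at this
    exact absurd hx (not_lt.mpr this.le)
  · intro hx
    by_cases hyE : y ∈ E
    · have := bperm_lt hV hyE
      rwa [hyx] at this
    · exact absurd (hyx ▸ bpFun_not_mem hV.1 hyE) (not_not.mpr hx)

lemma bperm_Eset_Vset {σ : Equiv.Perm (Fin n)} (hd : IsDerangement σ) (ha : Avoids321 σ) :
    bperm (Eset σ) (Vset σ) = σ := by
  have hc : (Eset σ).card = (Vset σ).card := (card_Vset σ).symm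
  apply Equiv.ext
  intro x
  rw [bperm_apply]
  by_cases hx : x ∈ Eset σ
  · rw [bpFun, dif_pos hc, dif_pos hx]
    have hf : (fun j : Fin (Eset σ).card => σ ((Eset σ).orderEmbOfFin rfl j)) =
        ⇑((Vset σ).orderEmbOfFin hc.symm) := by
      apply Finset.orderEmbOfFin_unique
      · intro j
        have hm := Finset.orderEmbOfFin_mem (Eset σ) rfl j
        rw [mem_Eset] at hm
        rw [mem_Vset]
        simpa using hm
      · intro a b hab
        have hmono := ((Eset σ).orderEmbOfFin rfl).lt_iff_lt.mpr hab
        have hma := Finset.orderEmbOfFin_mem (Eset σ) rfl a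
        have hmb := Finset.orderEmbOfFin_mem (Eset σ) rfl b
        rw [mem_Eset] at hma hmb
        exact mono_exc ha hmono hma hmb
    have := congrFun hf ((Eset σ).orderIsoOfFin rfl |>.symm ⟨x, hx⟩)
    rw [aux_emb_symm hx] at this
    exact this.symm
  · rw [bpFun, dif_pos hc, dif_neg hx]
    have hcc := compl_card hc
    have hf : (fun j : Fin (Eset σ)ᶜ.card => σ ((Eset σ)ᶜ.orderEmbOfFin rfl j)) =
        ⇑((Vset σ)ᶜ.orderEmbOfFin hcc) := by
      apply Finset.orderEmbOfFin_unique
      · intro j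
        have hm := Finset.orderEmbOfFin_mem (Eset σ)ᶜ rfl j
        rw [Finset.mem_compl, mem_Eset] at hm
        rw [Finset.mem_compl, mem_Vset]
        simpa using hm
      · intro a b hab
        have hmono := ((Eset σ)ᶜ.orderEmbOfFin rfl).lt_iff_lt.mpr hab
        have hma := Finset.orderEmbOfFin_mem (Eset σ)ᶜ rfl a
        have hmb := Finset.orderEmbOfFin_mem (Eset σ)ᶜ rfl b
        rw [Finset.mem_compl, mem_Eset] at hma hmb
        have hma' : σ _ < _ := lt_of_le_of_ne (not_lt.mp hma) (hd _)
        have hmb' : σ _ < _ := lt_of_le_of_ne (not_lt.mp hmb) (hd _)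
        exact mono_drop ha hmono hma' hmb'
    have := congrFun hf ((Eset σ)ᶜ.orderIsoOfFin rfl |>.symm ⟨x, Finset.mem_compl.mpr hx⟩)
    rw [aux_emb_symm (Finset.mem_compl.mpr hx)] at this
    exact this.symm

lemma exc_eq (σ : Equiv.Perm (Fin n)) : exc σ = (Eset σ).card := rfl

lemma cpk_eq {σ : Equiv.Perm (Fin n)} (hd : IsDerangement σ) :
    cpk σ = (Vset σ \ Eset σ).card := by
  rw [cpk]
  congr 1
  ext x
  simp only [Finset.mem_filter, mem_univ, true_and, Finset.mem_sdiff, mem_Vset, mem_Eset]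
  constructor
  · rintro ⟨h1, h2⟩; exact ⟨h1, not_lt.mpr h2.le⟩
  · rintro ⟨h1, h2⟩; exact ⟨h1, lt_of_le_of_ne (not_lt.mp h2) (hd x)⟩

lemma inv_pair_mem_Eset {σ : Equiv.Perm (Fin n)} (hd : IsDerangement σ) (ha : Avoids321 σ)
    {i j : Fin n} (hij : i < j) (hσ : σ j < σ i) : i ∈ Eset σ := by
  rw [mem_Eset]
  by_contra hx
  have hdrop : σ i < i := lt_of_le_of_ne (not_lt.mp hx) (hd i)
  obtain ⟨k, hki, hk⟩ := exists_earlier_bigger σ hdrop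
  exact ha ⟨k, i, j, hki, hij, hσ, hk⟩

lemma fiber_card {σ : Equiv.Perm (Fin n)} (ha : Avoids321 σ) {e : Fin n} (he : e ∈ Eset σ) :
    (univ.filter fun j => e < j ∧ σ j < σ e).card = (σ e : ℕ) - e := by
  rw [mem_Eset] at he
  set S := univ.filter fun j : Fin n => σ j < σ e with hS
  have hcard : S.card = ((σ e : Fin n) : ℕ) := aux_card_filter_apply_lt σ (σ e)
  have hsplit := Finset.card_filter_add_card_filter_not (s := S) (p := fun j => j ≤ e)
  have h1 : S.filter (fun j => j ≤ e) = univ.filter fun j : Fin n => j < e := by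
    ext j
    simp only [hS, Finset.filter_filter, Finset.mem_filter, mem_univ, true_and]
    constructor
    · rintro ⟨hj1, hj2⟩
      rcases lt_or_eq_of_le hj2 with hh | hh
      · exact hh
      · rw [hh] at hj1; exact absurd hj1 (lt_irrefl _)
    · intro hj
      refine ⟨?_, hj.le⟩
      by_contra hcon
      have hgt : σ e < σ j :=
        lt_of_le_of_ne (not_lt.mp hcon) (fun hh => (ne_of_lt hj) (σ.injective hh.symm))
      obtain ⟨k, hek, hk⟩ := exists_later_smaller σ he
      exact ha ⟨j, e, k, hj, hek, hk, hgt⟩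
  have h2 : (univ.filter fun j => e < j ∧ σ j < σ e) = S.filter (fun j => ¬ j ≤ e) := by
    ext j
    simp only [hS, Finset.filter_filter, Finset.mem_filter, mem_univ, true_and, not_le]
    tauto
  have h1c : (S.filter (fun j => j ≤ e)).card = (e : ℕ) := by
    rw [h1]; exact aux_card_filter_lt e
  have hlt : (e : ℕ) < ((σ e : Fin n) : ℕ) := he
  rw [h2]
  omega

lemma inv_eq {σ : Equiv.Perm (Fin n)} (hd : IsDerangement σ) (ha : Avoids321 σ) :
    inv σ = (∑ v ∈ Vset σ, (v : ℕ)) - ∑ e ∈ Eset σ, (e : ℕ) := by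
  have step1 : inv σ = ∑ e ∈ Eset σ, (univ.filter fun j => e < j ∧ σ j < σ e).card := by
    rw [inv]
    rw [Finset.card_eq_sum_card_fiberwise (f := Prod.fst) (t := Eset σ)
      (fun p hp => by
        rw [Finset.mem_coe, Finset.mem_filter] at hp
        exact inv_pair_mem_Eset hd ha hp.2.1 hp.2.2)]
    apply Finset.sum_congr rfl
    intro e _
    apply Finset.card_bij (fun p _ => p.2)
    · intro p hp
      simp only [Finset.mem_filter, mem_univ, true_and] at hp ⊢
      obtain ⟨⟨hp1, hp2⟩, hp3⟩ := hp
      rw [hp3] at hp1 hp2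
      exact ⟨hp1, hp2⟩
    · intro p hp q hq hpq
      simp only [Finset.mem_filter] at hp hq
      exact Prod.ext_iff.mpr ⟨hp.2.trans hq.2.symm, hpq⟩
    · intro j hj
      simp only [Finset.mem_filter, mem_univ, true_and] at hj
      exact ⟨(e, j), by simp only [Finset.mem_filter, mem_univ, true_and]; exact ⟨hj, trivial⟩, rfl⟩
  rw [step1, Finset.sum_congr rfl (fun e he => fiber_card ha he)]
  have step3 : ∑ e ∈ Eset σ, (((σ e : Fin n) : ℕ) - (e : ℕ)) =
      (∑ e ∈ Eset σ, ((σ e : Fin n) : ℕ)) - ∑ e ∈ Eset σ, (e : ℕ) :=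
    Finset.sum_tsub_distrib _ (fun e he => (mem_Eset.mp he).le)
  rw [step3]
  congr 1
  rw [Vset_eq_image, Finset.sum_image (fun a _ b _ h => σ.injective h)]

/-- the finset of valid pairs -/
def PSet (n : ℕ) : Finset (Finset (Fin n) × Finset (Fin n)) :=
  (univ ×ˢ univ).filter fun p => Valid p.1 p.2

/-- the finset of valid disjoint pairs (cores) -/
def CSet (n : ℕ) : Finset (Finset (Fin n) × Finset (Fin n)) :=
  (univ ×ˢ univ).filter fun p => Valid p.1 p.2 ∧ Disjoint p.1 p.2

lemma sum_DSet_eq (G : ℕ → ℕ → ℕ → ℝ) :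
    ∑ σ ∈ (univ.filter fun σ : Equiv.Perm (Fin n) => IsDerangement σ ∧ Avoids321 σ),
      G (inv σ) (cpk σ) (exc σ)
    = ∑ p ∈ PSet n,
      G ((∑ x ∈ p.2, (x : ℕ)) - ∑ x ∈ p.1, (x : ℕ)) ((p.2 \ p.1).card) p.1.card := by
  apply Finset.sum_nbij' (i := fun σ => (Eset σ, Vset σ)) (j := fun p => bperm p.1 p.2)
  · intro σ hσ
    rw [Finset.mem_filter] at hσ
    rw [PSet, Finset.mem_filter]
    exact ⟨Finset.mem_product.mpr ⟨mem_univ _, mem_univ _⟩, valid_of_perm hσ.2.1⟩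
  · intro p hp
    rw [PSet, Finset.mem_filter] at hp
    rw [Finset.mem_filter]
    exact ⟨mem_univ _, bperm_isDerangement hp.2, bperm_avoids hp.2⟩
  · intro σ hσ
    rw [Finset.mem_filter] at hσ
    exact bperm_Eset_Vset hσ.2.1 hσ.2.2
  · intro p hp
    rw [PSet, Finset.mem_filter] at hp
    exact Prod.ext_iff.mpr ⟨Eset_bperm hp.2, Vset_bperm hp.2⟩
  · intro σ hσ
    rw [Finset.mem_filter] at hσ
    rw [inv_eq hσ.2.1 hσ.2.2, cpk_eq hσ.2.1, exc_eq]

lemma valid_toggle {A B S : Finset (Fin n)} (hAB : Disjoint A B) (hS : Disjoint (A ∪ B) S) :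
    Valid (A ∪ S) (B ∪ S) ↔ Valid A B := by
  obtain ⟨hAS, hBS⟩ := Finset.disjoint_union_left.mp hS
  have hcardA : (A ∪ S).card = A.card + S.card := Finset.card_union_of_disjoint hAS
  have hcardB : (B ∪ S).card = B.card + S.card := Finset.card_union_of_disjoint hBS
  have hfA : ∀ y : Fin n, ((A ∪ S).filter (· ≤ y)).card
      = (A.filter (· ≤ y)).card + (S.filter (· ≤ y)).card := fun y => by
    rw [Finset.filter_union, Finset.card_union_of_disjoint (Finset.disjoint_filter_filter hAS)]
  have hfB : ∀ y : Fin n, ((B ∪ S).filter (· ≤ y)).card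
      = (B.filter (· ≤ y)).card + (S.filter (· ≤ y)).card := fun y => by
    rw [Finset.filter_union, Finset.card_union_of_disjoint (Finset.disjoint_filter_filter hBS)]
  constructor
  · rintro ⟨hc, h0, h1, h2⟩
    rw [hcardA, hcardB] at hc
    refine ⟨by omega, ?_, ?_, ?_⟩
    · intro y; have := h0 y; rw [hfA, hfB] at this; omega
    · intro y hy
      have := h1 y (Finset.mem_union_left _ hy); rw [hfA, hfB] at this; omega
    · intro y hy
      by_cases hyS : y ∈ S
      · have := h1 y (Finset.mem_union_right _ hyS); rw [hfA, hfB] at this; omega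
      · have hy' : y ∉ B ∪ S := by rw [Finset.mem_union]; push_neg; exact ⟨hy, hyS⟩
        have := h2 y hy'; rw [hfA, hfB] at this; omega
  · rintro ⟨hc, h0, h1, h2⟩
    refine ⟨by rw [hcardA, hcardB, hc], ?_, ?_, ?_⟩
    · intro y; rw [hfA, hfB]; have := h0 y; omega
    · intro y hy
      rw [hfA, hfB]
      rcases Finset.mem_union.mp hy with hyA | hyS
      · have := h1 y hyA; omega
      · have hyB : y ∉ B := (Finset.disjoint_right.mp hBS) hyS
        have := h2 y hyB; omega
    · intro y hy
      rw [hfA, hfB]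
      have hyB : y ∉ B := fun hh => hy (Finset.mem_union_left _ hh)
      have := h2 y hyB; omega

lemma union_sdiff_of_disjoint {A B S : Finset (Fin n)} (hAB : Disjoint A B)
    (hAS : Disjoint A S) : (A ∪ S) \ (B ∪ S) = A := by
  ext x
  simp only [Finset.mem_sdiff, Finset.mem_union]
  constructor
  · rintro ⟨hA | hS', hn⟩
    · exact hA
    · exact absurd (Or.inr hS') hn
  · intro hx
    refine ⟨Or.inl hx, ?_⟩
    push_neg
    exact ⟨Finset.disjoint_left.mp hAB hx, Finset.disjoint_left.mp hAS hx⟩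

lemma union_inter_of_disjoint {A B S : Finset (Fin n)} (hAB : Disjoint A B) :
    (A ∪ S) ∩ (B ∪ S) = S := by
  ext x
  simp only [Finset.mem_inter, Finset.mem_union]
  constructor
  · rintro ⟨hA | hS1, hB | hS2⟩
    · exact absurd hB (Finset.disjoint_left.mp hAB hA)
    · exact hS2
    · exact hS1
    · exact hS2
  · intro hx; exact ⟨Or.inr hx, Or.inr hx⟩

lemma sum_pairs (q u v w : ℝ) :
    ∑ p ∈ PSet n,
      q ^ ((∑ x ∈ p.2, (x : ℕ)) - ∑ x ∈ p.1, (x : ℕ)) * u ^ (p.2 \ p.1).card *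
        (v ^ (p.1 ∩ p.2).card * w ^ (n - (p.1 ∪ p.2).card))
    = ∑ c ∈ CSet n,
      q ^ ((∑ x ∈ c.2, (x : ℕ)) - ∑ x ∈ c.1, (x : ℕ)) * u ^ c.2.card *
        (v + w) ^ (n - (c.1 ∪ c.2).card) := by
  have hstep1 :
      ∑ p ∈ PSet n,
        q ^ ((∑ x ∈ p.2, (x : ℕ)) - ∑ x ∈ p.1, (x : ℕ)) * u ^ (p.2 \ p.1).card *
          (v ^ (p.1 ∩ p.2).card * w ^ (n - (p.1 ∪ p.2).card))
      = ∑ x ∈ (CSet n).sigma (fun c => ((c.1 ∪ c.2)ᶜ : Finset (Fin n)).powerset),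
        q ^ ((∑ y ∈ x.1.2, (y : ℕ)) - ∑ y ∈ x.1.1, (y : ℕ)) * u ^ x.1.2.card *
          (v ^ x.2.card * w ^ (((x.1.1 ∪ x.1.2)ᶜ : Finset (Fin n)).card - x.2.card)) := by
    apply Finset.sum_nbij' (i := fun p => ⟨(p.1 \ p.2, p.2 \ p.1), p.1 ∩ p.2⟩)
      (j := fun x => (x.1.1 ∪ x.2, x.1.2 ∪ x.2))
    · -- maps into the sigma set
      intro p hp
      rw [PSet, Finset.mem_filter] at hp
      have hAB : Disjoint (p.1 \ p.2) (p.2 \ p.1) := disjoint_sdiff_sdiff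
      have hAS : Disjoint (p.1 \ p.2) (p.1 ∩ p.2) := by
        rw [Finset.disjoint_left]; intro a h1 h2
        rw [Finset.mem_sdiff] at h1; rw [Finset.mem_inter] at h2
        exact h1.2 h2.2
      have hBS : Disjoint (p.2 \ p.1) (p.1 ∩ p.2) := by
        rw [Finset.disjoint_left]; intro a h1 h2
        rw [Finset.mem_sdiff] at h1; rw [Finset.mem_inter] at h2
        exact h1.2 h2.1
      have hSu : Disjoint ((p.1 \ p.2) ∪ (p.2 \ p.1)) (p.1 ∩ p.2) :=
        Finset.disjoint_union_left.mpr ⟨hAS, hBS⟩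
      have hAu : (p.1 \ p.2) ∪ (p.1 ∩ p.2) = p.1 := Finset.sdiff_union_inter _ _
      have hBu : (p.2 \ p.1) ∪ (p.1 ∩ p.2) = p.2 := by
        rw [Finset.inter_comm]; exact Finset.sdiff_union_inter _ _
      rw [Finset.mem_sigma]
      constructor
      · rw [CSet, Finset.mem_filter]
        refine ⟨Finset.mem_product.mpr ⟨mem_univ _, mem_univ _⟩, ?_, hAB⟩
        apply (valid_toggle hAB hSu).mp
        rw [hAu, hBu]
        exact hp.2
      · rw [Finset.mem_powerset]
        intro a ha
        rw [Finset.mem_inter] at ha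
        rw [Finset.mem_compl, Finset.mem_union]
        push_neg
        constructor <;> rw [Finset.mem_sdiff] <;> push_neg <;> intro _
        · exact ha.2
        · exact ha.1
    · -- inverse maps into PSet
      rintro ⟨⟨A, B⟩, S⟩ hx
      rw [Finset.mem_sigma, CSet, Finset.mem_filter, Finset.mem_powerset] at hx
      obtain ⟨⟨-, hV, hAB⟩, hSsub⟩ := hx
      have hSu : Disjoint (A ∪ B) S := Finset.disjoint_left.mpr
        (by intro a ha haS; exact (Finset.mem_compl.mp (hSsub haS)) ha)
      rw [PSet, Finset.mem_filter]
      exact ⟨Finset.mem_product.mpr ⟨mem_univ _, mem_univ _⟩, (valid_toggle hAB hSu).mpr hV⟩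
    · -- left inverse
      intro p hp
      have hAu : (p.1 \ p.2) ∪ (p.1 ∩ p.2) = p.1 := Finset.sdiff_union_inter _ _
      have hBu : (p.2 \ p.1) ∪ (p.1 ∩ p.2) = p.2 := by
        rw [Finset.inter_comm]; exact Finset.sdiff_union_inter _ _
      exact Prod.ext_iff.mpr ⟨hAu, hBu⟩
    · -- right inverse
      rintro ⟨⟨A, B⟩, S⟩ hx
      rw [Finset.mem_sigma, CSet, Finset.mem_filter, Finset.mem_powerset] at hx
      obtain ⟨⟨-, hV, hAB⟩, hSsub⟩ := hx
      have hAS : Disjoint A S := Finset.disjoint_left.mpr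
        (by intro a ha haS; exact (Finset.mem_compl.mp (hSsub haS)) (Finset.mem_union_left _ ha))
      have hBS : Disjoint B S := Finset.disjoint_left.mpr
        (by intro a ha haS; exact (Finset.mem_compl.mp (hSsub haS)) (Finset.mem_union_right _ ha))
      have e1 : (A ∪ S) \ (B ∪ S) = A := union_sdiff_of_disjoint hAB hAS
      have e2 : (B ∪ S) \ (A ∪ S) = B := union_sdiff_of_disjoint hAB.symm hBS
      have e3 : (A ∪ S) ∩ (B ∪ S) = S := union_inter_of_disjoint hAB
      show (⟨((A ∪ S) \ (B ∪ S), (B ∪ S) \ (A ∪ S)), (A ∪ S) ∩ (B ∪ S)⟩ :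
        Σ _ : Finset (Fin n) × Finset (Fin n), Finset (Fin n)) = ⟨(A, B), S⟩
      rw [e1, e2, e3]
    · -- summands agree
      intro p hp
      rw [PSet, Finset.mem_filter] at hp
      have hq : (∑ x ∈ p.2, (x : ℕ)) - ∑ x ∈ p.1, (x : ℕ)
          = (∑ y ∈ p.2 \ p.1, (y : ℕ)) - ∑ y ∈ p.1 \ p.2, (y : ℕ) := by
        have d1 : Disjoint (p.1 \ p.2) (p.1 ∩ p.2) := by
          rw [Finset.disjoint_left]; intro a h1 h2
          rw [Finset.mem_sdiff] at h1; rw [Finset.mem_inter] at h2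
          exact h1.2 h2.2
        have d2 : Disjoint (p.2 \ p.1) (p.2 ∩ p.1) := by
          rw [Finset.disjoint_left]; intro a h1 h2
          rw [Finset.mem_sdiff] at h1; rw [Finset.mem_inter] at h2
          exact h1.2 h2.2
        have s1 : ∑ x ∈ p.1, (x : ℕ)
            = (∑ y ∈ p.1 \ p.2, (y : ℕ)) + ∑ y ∈ p.1 ∩ p.2, (y : ℕ) := by
          rw [← Finset.sum_union d1, Finset.sdiff_union_inter]
        have s2 : ∑ x ∈ p.2, (x : ℕ)
            = (∑ y ∈ p.2 \ p.1, (y : ℕ)) + ∑ y ∈ p.2 ∩ p.1, (y : ℕ) := by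
          rw [← Finset.sum_union d2, Finset.sdiff_union_inter]
        have s3 : ∑ y ∈ p.2 ∩ p.1, (y : ℕ) = ∑ y ∈ p.1 ∩ p.2, (y : ℕ) := by
          rw [Finset.inter_comm]
        rw [s1, s2, s3]
        omega
      have hw : n - (p.1 ∪ p.2).card
          = ((p.1 \ p.2 ∪ p.2 \ p.1)ᶜ : Finset (Fin n)).card - (p.1 ∩ p.2).card := by
        have c1 : (p.1 \ p.2).card + p.2.card = (p.1 ∪ p.2).card :=
          Finset.card_sdiff_add_card _ _
        have c2 : (p.2 \ p.1).card + (p.2 ∩ p.1).card = p.2.card :=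
          Finset.card_sdiff_add_card_inter _ _
        have c3 : (p.2 ∩ p.1).card = (p.1 ∩ p.2).card := by rw [Finset.inter_comm]
        have c4 : ((p.1 \ p.2 ∪ p.2 \ p.1)ᶜ : Finset (Fin n)).card
            = n - (p.1 \ p.2 ∪ p.2 \ p.1).card := by
          rw [Finset.card_compl, Fintype.card_fin]
        have c5 : (p.1 \ p.2 ∪ p.2 \ p.1).card = (p.1 \ p.2).card + (p.2 \ p.1).card :=
          Finset.card_union_of_disjoint disjoint_sdiff_sdiff
        have c6 : (p.1 ∪ p.2).card ≤ n := by
          simpa using Finset.card_le_univ (p.1 ∪ p.2)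
        omega
      rw [hq, hw]
  rw [hstep1, Finset.sum_sigma]
  apply Finset.sum_congr rfl
  intro c hc
  show ∑ S ∈ ((c.1 ∪ c.2)ᶜ : Finset (Fin n)).powerset,
      q ^ ((∑ y ∈ c.2, (y : ℕ)) - ∑ y ∈ c.1, (y : ℕ)) * u ^ c.2.card *
        (v ^ S.card * w ^ (((c.1 ∪ c.2)ᶜ : Finset (Fin n)).card - S.card))
      = q ^ ((∑ x ∈ c.2, (x : ℕ)) - ∑ x ∈ c.1, (x : ℕ)) * u ^ c.2.card *
        (v + w) ^ (n - (c.1 ∪ c.2).card)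
  have hM : ((c.1 ∪ c.2)ᶜ : Finset (Fin n)).card = n - (c.1 ∪ c.2).card := by
    rw [Finset.card_compl, Fintype.card_fin]
  rw [← hM]
  have hbin : (v + w) ^ ((c.1 ∪ c.2)ᶜ : Finset (Fin n)).card
      = ∑ S ∈ ((c.1 ∪ c.2)ᶜ : Finset (Fin n)).powerset,
        v ^ S.card * w ^ (((c.1 ∪ c.2)ᶜ : Finset (Fin n)).card - S.card) := by
    have hpa := Finset.prod_add (fun _ : Fin n => v) (fun _ : Fin n => w)
      ((c.1 ∪ c.2)ᶜ : Finset (Fin n))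
    rw [Finset.prod_const] at hpa
    rw [hpa]
    apply Finset.sum_congr rfl
    intro S hS
    rw [Finset.prod_const, Finset.prod_const,
      Finset.card_sdiff_of_subset (Finset.mem_powerset.mp hS)]
  rw [hbin, Finset.mul_sum]

lemma master_sum (q u : ℝ) {v w v' w' : ℝ} (hvw : v + w = v' + w') :
    ∑ σ ∈ (univ.filter fun σ : Equiv.Perm (Fin n) => IsDerangement σ ∧ Avoids321 σ),
      q ^ inv σ * u ^ cpk σ * (v ^ (exc σ - cpk σ) * w ^ (n - exc σ - cpk σ))
    = ∑ σ ∈ (univ.filter fun σ : Equiv.Perm (Fin n) => IsDerangement σ ∧ Avoids321 σ),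
      q ^ inv σ * u ^ cpk σ * (v' ^ (exc σ - cpk σ) * w' ^ (n - exc σ - cpk σ)) := by
  have key : ∀ v w : ℝ,
      ∑ σ ∈ (univ.filter fun σ : Equiv.Perm (Fin n) => IsDerangement σ ∧ Avoids321 σ),
        q ^ inv σ * u ^ cpk σ * (v ^ (exc σ - cpk σ) * w ^ (n - exc σ - cpk σ))
      = ∑ c ∈ CSet n,
        q ^ ((∑ x ∈ c.2, (x : ℕ)) - ∑ x ∈ c.1, (x : ℕ)) * u ^ c.2.card *
          (v + w) ^ (n - (c.1 ∪ c.2).card) := by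
    intro v w
    rw [sum_DSet_eq (G := fun i c e => q ^ i * u ^ c * (v ^ (e - c) * w ^ (n - e - c)))]
    have hcongr : ∀ p ∈ PSet n,
        q ^ ((∑ x ∈ p.2, (x : ℕ)) - ∑ x ∈ p.1, (x : ℕ)) * u ^ (p.2 \ p.1).card *
          (v ^ (p.1.card - (p.2 \ p.1).card) * w ^ (n - p.1.card - (p.2 \ p.1).card))
        = q ^ ((∑ x ∈ p.2, (x : ℕ)) - ∑ x ∈ p.1, (x : ℕ)) * u ^ (p.2 \ p.1).card *
          (v ^ (p.1 ∩ p.2).card * w ^ (n - (p.1 ∪ p.2).card)) := by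
      intro p hp
      rw [PSet, Finset.mem_filter] at hp
      have hc := hp.2.1
      have e1 : p.1.card - (p.2 \ p.1).card = (p.1 ∩ p.2).card := by
        have a1 : (p.2 \ p.1).card + (p.2 ∩ p.1).card = p.2.card :=
          Finset.card_sdiff_add_card_inter _ _
        have a2 : (p.2 ∩ p.1).card = (p.1 ∩ p.2).card := by rw [Finset.inter_comm]
        have a3 : (p.1 ∩ p.2).card ≤ p.1.card := Finset.card_le_card Finset.inter_subset_left
        omega
      have e2 : n - p.1.card - (p.2 \ p.1).card = n - (p.1 ∪ p.2).card := by
        have a1 : (p.2 \ p.1).card + p.1.card = (p.2 ∪ p.1).card :=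
          Finset.card_sdiff_add_card _ _
        have a2 : (p.2 ∪ p.1).card = (p.1 ∪ p.2).card := by rw [Finset.union_comm]
        omega
      rw [e1, e2]
    rw [Finset.sum_congr rfl hcongr]
    exact sum_pairs q u v w
  rw [key v w, key v' w', hvw]

lemma cpk_le_of_mem {σ : Equiv.Perm (Fin n)} (hd : IsDerangement σ) :
    cpk σ ≤ exc σ ∧ exc σ + cpk σ ≤ n := by
  rw [cpk_eq hd, exc_eq]
  constructor
  · calc (Vset σ \ Eset σ).card ≤ (Vset σ).card := Finset.card_le_card Finset.sdiff_subset
    _ = (Eset σ).card := card_Vset σ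
  · have h1 : (Vset σ \ Eset σ).card + (Eset σ).card = (Vset σ ∪ Eset σ).card :=
      Finset.card_sdiff_add_card _ _
    have h2 : (Vset σ ∪ Eset σ).card ≤ n := by
      simpa using Finset.card_le_univ (Vset σ ∪ Eset σ)
    omega

end Stmt7Aux

theorem stmt7 (n : ℕ) (hn : 1 ≤ n) (q x t : ℝ) (h : (1 + x) * (x + t) * (1 + x * t) ≠ 0) :
    ∑ σ ∈ Finset.univ.filter
        (fun σ : Equiv.Perm (Fin n) => IsDerangement σ ∧ Avoids321 σ),
        q ^ inv σ * t ^ exc σ =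
      ((1 + x * t) / (1 + x)) ^ n *
        ∑ σ ∈ Finset.univ.filter
            (fun σ : Equiv.Perm (Fin n) => IsDerangement σ ∧ Avoids321 σ),
          q ^ inv σ * ((1 + x) ^ 2 * t / ((x + t) * (1 + x * t))) ^ cpk σ * ((x + t) / (1 + x * t)) ^ exc σ := by
  have h12 : (1 + x) * (x + t) ≠ 0 := left_ne_zero_of_mul h
  have h3 : (1 + x * t) ≠ 0 := right_ne_zero_of_mul h
  have h1 : (1 + x) ≠ 0 := left_ne_zero_of_mul h12
  have h2 : (x + t) ≠ 0 := right_ne_zero_of_mul h12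
  have hL : ∀ σ ∈ (Finset.univ.filter
      (fun σ : Equiv.Perm (Fin n) => IsDerangement σ ∧ Avoids321 σ)),
      q ^ inv σ * t ^ exc σ =
      q ^ inv σ * t ^ cpk σ * (t ^ (exc σ - cpk σ) * (1 : ℝ) ^ (n - exc σ - cpk σ)) := by
    intro σ hσ
    rw [Finset.mem_filter] at hσ
    obtain ⟨hce, hen⟩ := cpk_le_of_mem hσ.2.1
    rw [one_pow, mul_one, mul_assoc, ← pow_add, Nat.add_sub_cancel' hce]
  rw [Finset.sum_congr rfl hL, Finset.mul_sum]
  have hR : ∀ σ ∈ (Finset.univ.filter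
      (fun σ : Equiv.Perm (Fin n) => IsDerangement σ ∧ Avoids321 σ)),
      ((1 + x * t) / (1 + x)) ^ n *
        (q ^ inv σ * ((1 + x) ^ 2 * t / ((x + t) * (1 + x * t))) ^ cpk σ *
          ((x + t) / (1 + x * t)) ^ exc σ) =
      q ^ inv σ * t ^ cpk σ *
        (((x + t) / (1 + x)) ^ (exc σ - cpk σ) *
          ((1 + x * t) / (1 + x)) ^ (n - exc σ - cpk σ)) := by
    intro σ hσ
    rw [Finset.mem_filter] at hσ
    obtain ⟨hce, hen⟩ := cpk_le_of_mem hσ.2.1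
    obtain ⟨b, hb⟩ : ∃ b, exc σ = cpk σ + b := ⟨exc σ - cpk σ, by omega⟩
    obtain ⟨d, hd2⟩ : ∃ d, n = exc σ + cpk σ + d := ⟨n - exc σ - cpk σ, by omega⟩
    have hb' : exc σ - cpk σ = b := by omega
    have hd' : n - exc σ - cpk σ = d := by omega
    rw [hb', hd',
      show ((1 + x * t) / (1 + x)) ^ n
        = ((1 + x * t) / (1 + x)) ^ (exc σ + cpk σ + d) by rw [← hd2], hb]
    simp only [div_pow, mul_pow]
    rw [← pow_mul]
    field_simp
    ring
  rw [Finset.sum_congr rfl hR]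
  exact (master_sum q t (by field_simp; ring)).symm

end EulerExc
end
end
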